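/- arXiv:2210.12277 — 6 statements merged into one kernel-verified Lean document; each statement's English description precedes it below -/
import Mathlib

section
/- Let g : ℝ^p → ℝ be convex and differentiable, let ρ > 0, and let x, y ∈ ℝ^p satisfy the implicit (proximal) update equation y = x − (1/ρ)∇g(y). Then ‖∇g(y)‖ ≤ ‖∇g(x)‖. -/
open EuclideanSpace

lemma grad_mono_aux {p : ℕ} (g : EuclideanSpace ℝ (Fin p) → ℝ)
    (hgconv : ConvexOn ℝ Set.univ g) (hgdiff : Differentiable ℝ g)
    (a b : EuclideanSpace ℝ (Fin p)) :
    inner ℝ (gradient g a) (b - a) ≤ (inner ℝ (gradient g b) (b - a) : ℝ) := by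
  set φ : ℝ → ℝ := g ∘ (AffineMap.lineMap a b) with hφ
  have hconv : ConvexOn ℝ Set.univ φ := by
    have := hgconv.comp_affineMap (AffineMap.lineMap a b)
    simpa [Set.preimage_univ] using this
  have hline : ∀ t : ℝ, HasDerivAt (fun s : ℝ => AffineMap.lineMap a b s)
      (b - a) t := by
    intro t
    have : HasDerivAt (fun s : ℝ => s • (b - a) + a) ((1:ℝ) • (b - a)) t :=
      ((hasDerivAt_id t).smul_const (b - a)).add_const a
    have heq : (fun s : ℝ => AffineMap.lineMap a b s) = fun s : ℝ => s • (b - a) + a := by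
      funext s
      simp [AffineMap.lineMap_apply_module, smul_sub, sub_smul]
      module
    rw [heq]; simpa using this
  have hderiv : ∀ t : ℝ, HasDerivAt φ
      (inner ℝ (gradient g (AffineMap.lineMap a b t)) (b - a)) t := by
    intro t
    have hg := (hgdiff (AffineMap.lineMap a b t)).hasGradientAt
    have := hg.hasFDerivAt.comp_hasDerivAt t (hline t)
    simpa [hφ, Function.comp] using this
  have h0 : HasDerivAt φ (inner ℝ (gradient g a) (b - a)) 0 := by
    simpa using hderiv 0
  have h1 : HasDerivAt φ (inner ℝ (gradient g b) (b - a)) 1 := by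
    simpa using hderiv 1
  have hle0 := hconv.le_slope_of_hasDerivAt (Set.mem_univ (0:ℝ))
    (Set.mem_univ (1:ℝ)) one_pos h0
  have hle1 := hconv.slope_le_of_hasDerivAt (Set.mem_univ (0:ℝ))
    (Set.mem_univ (1:ℝ)) one_pos h1
  linarith

/-- Gradient norm contraction for the implicit (proximal) update:
if y = x − (1/ρ)∇g(y) with g convex and differentiable, then
‖∇g(y)‖ ≤ ‖∇g(x)‖. -/
theorem stmt_1 {p : ℕ} (g : EuclideanSpace ℝ (Fin p) → ℝ)
    (hgconv : ConvexOn ℝ Set.univ g) (hgdiff : Differentiable ℝ g)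
    (ρ : ℝ) (hρ : 0 < ρ) (x y : EuclideanSpace ℝ (Fin p))
    (hupd : y = x - (1 / ρ) • gradient g y) :
    ‖gradient g y‖ ≤ ‖gradient g x‖ := by
  have hxy : x - y = (1 / ρ) • gradient g y := by
    conv_lhs => rw [hupd]
    abel
  have hmono := grad_mono_aux g hgconv hgdiff y x
  rw [hxy] at hmono
  have hρ' : 0 < 1 / ρ := by positivity
  rw [inner_smul_right, inner_smul_right, real_inner_self_eq_norm_sq] at hmono
  have key : ‖gradient g y‖ ^ 2 ≤ inner ℝ (gradient g x) (gradient g y) := by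
    exact le_of_mul_le_mul_left hmono hρ'
  have hcs : (inner ℝ (gradient g x) (gradient g y) : ℝ) ≤
      ‖gradient g x‖ * ‖gradient g y‖ := real_inner_le_norm _ _
  rcases eq_or_lt_of_le (norm_nonneg (gradient g y)) with h | h
  · rw [← h]; exact norm_nonneg _
  · have : ‖gradient g y‖ * ‖gradient g y‖ ≤ ‖gradient g x‖ * ‖gradient g y‖ := by
      nlinarith
    exact le_of_mul_le_mul_right this h
end

section
/- Let g : ℝ^p → ℝ be convex and differentiable, let ρ > 0, and let x, y ∈ ℝ^p satisfy the implicit (proximal) update equation y = x − (1/ρ)∇g(y). Then for every z ∈ ℝ^p, ‖y − z‖² ≤ ‖x − z‖² − (2/ρ)(g(y) − g(z)) − ‖y − x‖². -/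
open scoped RealInnerProductSpace

/-- Gradient inequality for a convex differentiable function. -/
lemma grad_ineq_aux {p : ℕ} (g : EuclideanSpace ℝ (Fin p) → ℝ)
    (hgconv : ConvexOn ℝ Set.univ g) (hgdiff : Differentiable ℝ g)
    (a b : EuclideanSpace ℝ (Fin p)) :
    g a + ⟪gradient g a, b - a⟫ ≤ g b := by
  set v : EuclideanSpace ℝ (Fin p) := b - a with hv
  set φ : ℝ → ℝ := fun t => g (a + t • v) with hφ
  have hφconv : ConvexOn ℝ Set.univ φ := by
    have : ConvexOn ℝ ((fun t : ℝ => a + t • v) ⁻¹' Set.univ) (g ∘ fun t : ℝ => a + t • v) := by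
      apply hgconv.comp_affineMap (AffineMap.mk (fun t : ℝ => a + t • v)
        (LinearMap.toSpanSingleton ℝ _ v) ?_)
      intro p' q
      simp [LinearMap.toSpanSingleton, add_smul]
      abel
    simpa [hφ, Function.comp_def] using this
  have hline : HasDerivAt (fun t : ℝ => a + t • v) v 0 := by
    simpa using ((hasDerivAt_id (0:ℝ)).smul_const v).const_add a
  have hgrad : HasGradientAt g (gradient g a) a := (hgdiff a).hasGradientAt
  have hfd : HasFDerivAt g ((InnerProductSpace.toDual ℝ _) (gradient g a)) a := by
    rwa [hasGradientAt_iff_hasFDerivAt] at hgrad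
  have hφ0 : HasDerivAt φ ⟪gradient g a, v⟫ 0 := by
    have hfd' : HasFDerivAt g ((InnerProductSpace.toDual ℝ _) (gradient g a)) (a + (0:ℝ) • v) := by
      simpa using hfd
    have := hfd'.comp_hasDerivAt 0 hline
    simpa [φ, InnerProductSpace.toDual_apply_apply, Function.comp_def] using this
  have hslope := hφconv.le_slope_of_hasDerivAt (Set.mem_univ 0) (Set.mem_univ 1)
    one_pos hφ0
  rw [slope_def_field] at hslope
  simp only [sub_zero, div_one] at hslope
  have h0 : φ 0 = g a := by simp [φ]
  have h1 : φ 1 = g b := by simp [φ, v]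
  have : ⟪gradient g a, v⟫ ≤ g b - g a := by
    rw [h0, h1] at hslope; linarith
  linarith

/-- Descent inequality for the implicit (proximal) update:
if y = x − (1/ρ)∇g(y) with g convex and differentiable, then for every z,
‖y − z‖² ≤ ‖x − z‖² − (2/ρ)(g(y) − g(z)) − ‖y − x‖². -/
theorem stmt_2 {p : ℕ} (g : EuclideanSpace ℝ (Fin p) → ℝ)
    (hgconv : ConvexOn ℝ Set.univ g) (hgdiff : Differentiable ℝ g)
    (ρ : ℝ) (hρ : 0 < ρ) (x y : EuclideanSpace ℝ (Fin p))
    (hupd : y = x - (1 / ρ) • gradient g y) :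
    ∀ z : EuclideanSpace ℝ (Fin p),
      ‖y - z‖ ^ 2 ≤ ‖x - z‖ ^ 2 - (2 / ρ) * (g y - g z) - ‖y - x‖ ^ 2 := by
  intro z
  set v : EuclideanSpace ℝ (Fin p) := gradient g y with hvdef
  have hxy : x - y = (1 / ρ) • v := by
    rw [hupd]; abel
  have hexp : ‖x - z‖ ^ 2 = ‖x - y‖ ^ 2 + ‖y - z‖ ^ 2 + 2 * ⟪x - y, y - z⟫ := by
    have : x - z = (x - y) + (y - z) := by abel
    rw [this, ← real_inner_self_eq_norm_sq, ← real_inner_self_eq_norm_sq,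
      ← real_inner_self_eq_norm_sq, inner_add_add_self,
      real_inner_comm (y-z) (x-y)]
    ring
  have hinner : ⟪x - y, y - z⟫ = (1 / ρ) * ⟪v, y - z⟫ := by
    rw [hxy, real_inner_smul_left]
  have hgi := grad_ineq_aux g hgconv hgdiff y z
  have hvi : g y - g z ≤ ⟪v, y - z⟫ := by
    have : ⟪v, z - y⟫ = -⟪v, y - z⟫ := by
      rw [show z - y = -(y - z) by abel, inner_neg_right]
    linarith [hgi, this ▸ hgi]
  have hnorm : ‖x - y‖ = ‖y - x‖ := by rw [← norm_neg]; congr 1; abel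
  have h2 : (2 / ρ) * (g y - g z) ≤ 2 * ((1 / ρ) * ⟪v, y - z⟫) := by
    have := mul_le_mul_of_nonneg_left hvi (le_of_lt (by positivity : (0:ℝ) < 2 / ρ))
    calc (2 / ρ) * (g y - g z) ≤ (2 / ρ) * ⟪v, y - z⟫ := this
      _ = 2 * ((1 / ρ) * ⟪v, y - z⟫) := by ring
  have hnorm2 : ‖x - y‖ ^ 2 = ‖y - x‖ ^ 2 := by rw [hnorm]
  linarith [hexp, hinner, h2, hnorm2]
end

section
/- Let C ⊆ ℝ^p be a nonempty closed convex set with nearest-point projection P_C, let θ* ∈ C, let g : ℝ^p → ℝ be convex and differentiable, let ρ > 0, and let w, θ⁺ ∈ ℝ^p with w = P_C(w') for some w' ∈ ℝ^p, satisfying the implicit update θ⁺ = w − (1/ρ)∇g(θ⁺). Then ‖P_C(θ⁺) − θ*‖² ≤ ‖w − θ*‖² − (2/ρ)(g(w) − g(θ*)) + (2/ρ²)‖∇g(w)‖². -/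
open Set

local notation "⟪" x ", " y "⟫" => @inner ℝ _ _ x y

lemma grad_conv_aux {p : ℕ} (g : EuclideanSpace ℝ (Fin p) → ℝ)
    (hgconv : ConvexOn ℝ Set.univ g) (hgdiff : Differentiable ℝ g)
    (x y : EuclideanSpace ℝ (Fin p)) :
    ⟪gradient g x, y - x⟫ ≤ g y - g x := by
  set c : ℝ → EuclideanSpace ℝ (Fin p) := fun t => x + t • (y - x) with hc
  have hcd : ∀ t : ℝ, HasDerivAt c (y - x) t := by
    intro t
    have h1 : HasDerivAt (fun t : ℝ => t • (y - x)) ((1:ℝ) • (y - x)) t :=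
      (hasDerivAt_id t).smul_const (y - x)
    simpa [hc] using h1.const_add x
  have hφ : ∀ t : ℝ, HasDerivAt (fun t => g (c t)) ⟪gradient g (c t), y - x⟫ t := by
    intro t
    have hg := ((hgdiff (c t)).hasGradientAt).hasFDerivAt
    have h2 := hg.comp_hasDerivAt t (hcd t)
    simpa [InnerProductSpace.toDual_apply_apply, Function.comp_def] using h2
  have hconv : ConvexOn ℝ Set.univ (fun t => g (c t)) := by
    have haff := hgconv.comp_affineMap (AffineMap.lineMap x y : ℝ →ᵃ[ℝ] _)
    have heq : (fun t : ℝ => g (c t)) = g ∘ (AffineMap.lineMap x y : ℝ →ᵃ[ℝ] _) := by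
      funext t
      simp [hc, AffineMap.lineMap_apply, add_comm]
    rw [heq]
    simpa using haff
  have hslope := hconv.le_slope_of_hasDerivAt (mem_univ (0:ℝ)) (mem_univ (1:ℝ))
    one_pos (hφ 0)
  have hc0 : c 0 = x := by simp [hc]
  have hc1 : c 1 = y := by simp [hc]
  rw [hc0] at hslope
  have : slope (fun t => g (c t)) 0 1 = g y - g x := by
    rw [slope_def_field]
    simp [hc0, hc1]
  linarith [hslope, this.le, this.ge]

lemma proj_ineq {p : ℕ} {C : Set (EuclideanSpace ℝ (Fin p))} (hCconv : Convex ℝ C)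
    {P : EuclideanSpace ℝ (Fin p) → EuclideanSpace ℝ (Fin p)}
    (hP : ∀ x, P x ∈ C ∧ ∀ y ∈ C, ‖x - P x‖ ≤ ‖x - y‖)
    (u : EuclideanSpace ℝ (Fin p)) {y : EuclideanSpace ℝ (Fin p)} (hy : y ∈ C) :
    ⟪u - P u, y - P u⟫ ≤ 0 := by
  have hmem := (hP u).1
  letI : Nonempty C := ⟨⟨P u, hmem⟩⟩
  have hinf : ‖u - P u‖ = ⨅ w : C, ‖u - w‖ := by
    apply le_antisymm
    · exact le_ciInf fun w => (hP u).2 w w.2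
    · exact ciInf_le ⟨0, by rintro r ⟨w, rfl⟩; positivity⟩ (⟨P u, hmem⟩ : C)
  exact (norm_eq_iInf_iff_real_inner_le_zero hCconv hmem).mp hinf y hy

set_option maxHeartbeats 1000000 in
/-- One-step recursion bound for the projected implicit update:
‖P_C(θ⁺) − θ*‖² ≤ ‖w − θ*‖² − (2/ρ)(g(w) − g(θ*)) + (2/ρ²)‖∇g(w)‖². -/
theorem stmt_5 {p : ℕ} (C : Set (EuclideanSpace ℝ (Fin p)))
    (hCne : C.Nonempty) (hCclosed : IsClosed C) (hCconv : Convex ℝ C)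
    (P : EuclideanSpace ℝ (Fin p) → EuclideanSpace ℝ (Fin p))
    (hP : ∀ x, P x ∈ C ∧ ∀ y ∈ C, ‖x - P x‖ ≤ ‖x - y‖)
    (θstar : EuclideanSpace ℝ (Fin p)) (hθstar : θstar ∈ C)
    (g : EuclideanSpace ℝ (Fin p) → ℝ)
    (hgconv : ConvexOn ℝ Set.univ g) (hgdiff : Differentiable ℝ g)
    (ρ : ℝ) (hρ : 0 < ρ)
    (w w' θplus : EuclideanSpace ℝ (Fin p)) (hw : w = P w')
    (hupd : θplus = w - (1 / ρ) • gradient g θplus) :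
    ‖P θplus - θstar‖ ^ 2 ≤
      ‖w - θstar‖ ^ 2 - (2 / ρ) * (g w - g θstar) +
        (2 / ρ ^ 2) * ‖gradient g w‖ ^ 2 := by
  set G := gradient g θplus with hG
  set v := gradient g w with hv
  -- Step 1: projection decreases distance to points of C
  have hproj : ‖P θplus - θstar‖ ^ 2 ≤ ‖θplus - θstar‖ ^ 2 := by
    have hvar := proj_ineq hCconv hP θplus hθstar
    have hdecomp : θplus - θstar = (θplus - P θplus) + (P θplus - θstar) := by abel
    have hexp : ‖θplus - θstar‖ ^ 2 =
        ‖θplus - P θplus‖ ^ 2 + 2 * ⟪θplus - P θplus, P θplus - θstar⟫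
          + ‖P θplus - θstar‖ ^ 2 := by
      rw [hdecomp]; exact norm_add_sq_real _ _
    have hin : ⟪θplus - P θplus, P θplus - θstar⟫ =
        - ⟪θplus - P θplus, θstar - P θplus⟫ := by
      rw [← inner_neg_right]; congr 1; abel
    nlinarith [sq_nonneg ‖θplus - P θplus‖, hvar, hexp, hin]
  -- Step 2: expand ‖θplus - θstar‖²
  have hθeq : θplus - θstar = (w - θstar) - (1 / ρ) • G := by
    rw [hupd]; abel
  have hexp2 : ‖θplus - θstar‖ ^ 2 =
      ‖w - θstar‖ ^ 2 - 2 * ((1/ρ) * ⟪w - θstar, G⟫) + (1/ρ)^2 * ‖G‖ ^ 2 := by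
    rw [hθeq, norm_sub_sq_real, real_inner_smul_right, norm_smul, Real.norm_eq_abs,
      abs_of_pos (by positivity : (0:ℝ) < 1/ρ)]
    ring
  -- Step 3: convexity inequalities
  have h1 : ⟪G, θstar - θplus⟫ ≤ g θstar - g θplus :=
    grad_conv_aux g hgconv hgdiff θplus θstar
  have h2 : ⟪v, θplus - w⟫ ≤ g θplus - g w :=
    grad_conv_aux g hgconv hgdiff w θplus
  have hθw : θplus - w = -((1/ρ) • G) := by rw [hupd]; abel
  have h2' : -((1/ρ) * ⟪v, G⟫) ≤ g θplus - g w := by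
    rw [hθw, inner_neg_right, real_inner_smul_right] at h2; linarith
  have h3 : ⟪v, G⟫ ≤ ‖v‖ * ‖G‖ := real_inner_le_norm v G
  -- Step 4: decompose the cross term
  have hcross : ⟪w - θstar, G⟫ = ⟪θplus - θstar, G⟫ + (1/ρ) * ‖G‖ ^ 2 := by
    have hwθ : w - θstar = (θplus - θstar) + (1/ρ) • G := by rw [hupd]; abel
    rw [hwθ, inner_add_left, real_inner_smul_left, real_inner_self_eq_norm_sq]
  have h1' : g θplus - g θstar ≤ ⟪θplus - θstar, G⟫ := by
    have hsymm : ⟪G, θstar - θplus⟫ = - ⟪θplus - θstar, G⟫ := by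
      rw [real_inner_comm, ← inner_neg_left]; congr 1; abel
    linarith [h1, hsymm.le, hsymm.ge]
  -- Combine everything
  have hρ2 : (0:ℝ) < ρ^2 := by positivity
  have hBnn : (0:ℝ) ≤ ‖G‖ := norm_nonneg _
  have hVnn : (0:ℝ) ≤ ‖v‖ := norm_nonneg _
  have key : ⟪w - θstar, G⟫ ≥ g w - g θstar - (1/ρ) * (‖v‖ * ‖G‖) + (1/ρ) * ‖G‖^2 := by
    have := le_trans h2' (by linarith : g θplus - g w ≤ ⟪θplus - θstar, G⟫ - (g w - g θstar))
    have hmono : -((1/ρ) * (‖v‖ * ‖G‖)) ≤ -((1/ρ) * ⟪v, G⟫) := by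
      have : (1/ρ) * ⟪v, G⟫ ≤ (1/ρ) * (‖v‖ * ‖G‖) :=
        mul_le_mul_of_nonneg_left h3 (by positivity)
      linarith
    rw [hcross]; linarith
  calc ‖P θplus - θstar‖ ^ 2 ≤ ‖θplus - θstar‖ ^ 2 := hproj
    _ = ‖w - θstar‖ ^ 2 - 2 * ((1/ρ) * ⟪w - θstar, G⟫) + (1/ρ)^2 * ‖G‖ ^ 2 := hexp2
    _ ≤ ‖w - θstar‖ ^ 2 - (2 / ρ) * (g w - g θstar) + (2 / ρ ^ 2) * ‖v‖ ^ 2 := by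
        have hr0 : (0:ℝ) < 1/ρ := by positivity
        set r := 1/ρ with hr
        have e0 : 2/ρ = 2*r := by rw [hr]; ring
        have e0' : 2/ρ^2 = 2*r^2 := by rw [hr]; field_simp
        have hkey := mul_le_mul_of_nonneg_left key hr0.le
        have e1 : r*(g w - g θstar - r*(‖v‖*‖G‖) + r*‖G‖^2)
            = r*(g w - g θstar) - r^2*(‖v‖*‖G‖) + r^2*‖G‖^2 := by ring
        have hA : 2*(‖v‖*‖G‖) - ‖G‖^2 ≤ 2*‖v‖^2 := by
          nlinarith [sq_nonneg (‖v‖-‖G‖), sq_nonneg ‖v‖]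
        have h7 : r^2*(2*(‖v‖*‖G‖) - ‖G‖^2) ≤ r^2*(2*‖v‖^2) :=
          mul_le_mul_of_nonneg_left hA (by positivity)
        rw [e1] at hkey
        rw [e0, e0']
        linarith [hkey, h7]
end

section
/- Under the stochastic proximal distance setup, for every k ≥ 0, E[‖P_C(θ_k) − θ*‖²] ≤ exp(4L²s/ρ₁²)·(4G²s/ρ₁² + ‖P_C(θ₀) − θ*‖²) = r². -/
open MeasureTheory Filter Real
open Set
open scoped RealInnerProductSpace

section auxlemmas
variable {H : Type*} [NormedAddCommGroup H] [InnerProductSpace ℝ H] [CompleteSpace H]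


/-- derivative of a function along a line -/
lemma line_hasDerivAt (f : H → ℝ) (hd : Differentiable ℝ f) (x d : H) (t : ℝ) :
    HasDerivAt (fun t : ℝ => f (x + t • d)) ⟪gradient f (x + t • d), d⟫ t := by
  have hline : HasDerivAt (fun t : ℝ => x + t • d) d t := by
    simpa using ((hasDerivAt_id t).smul_const d).const_add x
  have hgrad := (hd (x + t • d)).hasGradientAt
  have hfd : HasFDerivAt f ((InnerProductSpace.toDual ℝ H) (gradient f (x + t • d))) (x + t • d) :=
    hasGradientAt_iff_hasFDerivAt.mp hgrad
  have h := hfd.comp_hasDerivAt t hline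
  rw [InnerProductSpace.toDual_apply_apply] at h
  exact h

lemma aux_subgrad (f : H → ℝ) (hc : ConvexOn ℝ Set.univ f) (hd : Differentiable ℝ f) (x y : H) :
    f x + ⟪gradient f x, y - x⟫ ≤ f y := by
  set g : ℝ → ℝ := fun t => f (x + t • (y - x)) with hgdef
  have hgc : ConvexOn ℝ Set.univ g := by
    have := hc.comp_affineMap (AffineMap.lineMap x y : ℝ →ᵃ[ℝ] H)
    have he : g = f ∘ (AffineMap.lineMap x y : ℝ →ᵃ[ℝ] H) := by
      funext t
      simp only [hgdef, Function.comp_apply, AffineMap.lineMap_apply_module]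
      congr 1
      module
    rw [he]
    simpa using this
  have hder : HasDerivAt g ⟪gradient f x, y - x⟫ 0 := by
    simpa using line_hasDerivAt f hd x (y - x) 0
  have hs := hgc.le_slope_of_hasDerivAt (Set.mem_univ (0:ℝ)) (Set.mem_univ (1:ℝ)) one_pos hder
  rw [slope_def_field] at hs
  simp [hgdef] at hs ⊢
  linarith

lemma aux_mono (f : H → ℝ) (hc : ConvexOn ℝ Set.univ f) (hd : Differentiable ℝ f) (x y : H) :
    0 ≤ ⟪gradient f x - gradient f y, x - y⟫ := by
  have h1 := aux_subgrad f hc hd x y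
  have h2 := aux_subgrad f hc hd y x
  have e1 : ⟪gradient f x, y - x⟫ = - ⟪gradient f x, x - y⟫ := by
    rw [show y - x = -(x-y) by abel, inner_neg_right]
  rw [inner_sub_left]
  linarith [e1 ▸ h1, h2]

lemma aux_deriv_nonneg {g : ℝ → ℝ} {d : ℝ} (hg : HasDerivAt g d 0)
    (h : ∀ t ∈ Set.Ioc (0:ℝ) 1, g 0 ≤ g t) : 0 ≤ d := by
  have h1 := hasDerivAt_iff_tendsto_slope.mp hg
  have h2 : Tendsto (slope g 0) (nhdsWithin 0 (Set.Ioi 0)) (nhds d) :=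
    h1.mono_left (nhdsWithin_mono _ (fun t ht => ne_of_gt ht))
  refine ge_of_tendsto h2 ?_
  filter_upwards [Ioc_mem_nhdsGT_of_mem (by norm_num : (0:ℝ) ∈ Set.Ico (0:ℝ) 1)] with t ht
  rw [slope_def_field]
  have := h t ht
  have ht0 : (0:ℝ) < t := ht.1
  rw [div_eq_mul_inv]
  exact mul_nonneg (by linarith) (inv_nonneg.2 (by linarith))



lemma step_ineq (f : H → ℝ) (hc : ConvexOn ℝ Set.univ f) (hd : Differentiable ℝ f)
    {ρ : ℝ} (hρ : 0 < ρ) (x u z : H) (hx : x = u - ρ⁻¹ • gradient f x) :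
    ‖x - z‖^2 ≤ ‖u - z‖^2 - 2*ρ⁻¹*⟪gradient f z, u - z⟫ + (ρ⁻¹)^2*‖gradient f z‖^2 := by
  set b := gradient f x with hb
  set g := gradient f z with hg
  have hu : u - z = (x - z) + ρ⁻¹ • b := by
    rw [hx]; abel
  have hρ' : (0:ℝ) ≤ ρ⁻¹ := inv_nonneg.2 hρ.le
  have e1 : ‖u - z‖^2 = ‖x - z‖^2 + 2*(ρ⁻¹*⟪x - z, b⟫) + (ρ⁻¹)^2*‖b‖^2 := by
    rw [hu, norm_add_sq_real, real_inner_smul_right, norm_smul]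
    rw [Real.norm_eq_abs, abs_of_nonneg hρ']
    ring
  have e2 : 0 ≤ ⟪b - g, x - z⟫ := aux_mono f hc hd x z
  have e3 : ⟪g, u - z⟫ = ⟪g, x - z⟫ + ρ⁻¹*⟪g, b⟫ := by
    rw [hu, inner_add_right, real_inner_smul_right]
  have e4 : (0:ℝ) ≤ (ρ⁻¹)^2 * ‖b - g‖^2 := by positivity
  have e5 : ‖b - g‖^2 = ‖b‖^2 - 2*⟪b,g⟫ + ‖g‖^2 := norm_sub_sq_real b g
  have e6 : ⟪b - g, x - z⟫ = ⟪b, x - z⟫ - ⟪g, x - z⟫ := inner_sub_left b g (x-z)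
  have e7 : ⟪x - z, b⟫ = ⟪b, x - z⟫ := real_inner_comm _ _
  have e8 : ⟪g, b⟫ = ⟪b, g⟫ := real_inner_comm _ _
  have t1 : 0 ≤ 2*ρ⁻¹*⟪b - g, x - z⟫ := by
    apply mul_nonneg (by linarith) e2
  nlinarith [e1, e3, e4, e5, e6, e7, e8, t1]

lemma step_ineq2 (f : H → ℝ) (hc : ConvexOn ℝ Set.univ f) (hd : Differentiable ℝ f)
    {ρ : ℝ} (hρ : 0 < ρ) (x u z : H) (hx : x = u - ρ⁻¹ • gradient f x) :
    ‖x - z‖ ≤ ‖u - z‖ + ρ⁻¹ * ‖gradient f z‖ := by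
  have h := step_ineq f hc hd hρ x u z hx
  have hρ' : (0:ℝ) ≤ ρ⁻¹ := inv_nonneg.2 hρ.le
  have hcs : |⟪gradient f z, u - z⟫| ≤ ‖gradient f z‖ * ‖u - z‖ := abs_real_inner_le_norm _ _
  have habs := abs_le.1 hcs
  refine le_of_pow_le_pow_left₀ two_ne_zero (by positivity) ?_
  have expand : (‖u - z‖ + ρ⁻¹ * ‖gradient f z‖)^2
      = ‖u - z‖^2 + 2*ρ⁻¹*(‖gradient f z‖*‖u - z‖) + (ρ⁻¹)^2*‖gradient f z‖^2 := by ring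
  nlinarith [h, habs.1, mul_nonneg (mul_nonneg (by norm_num : (0:ℝ) ≤ 2) hρ') (sub_nonneg.2 habs.1)]

-- uniqueness of implicit update
lemma implicit_unique (f : H → ℝ) (hc : ConvexOn ℝ Set.univ f) (hd : Differentiable ℝ f)
    {ρ : ℝ} (hρ : 0 < ρ) (x x' u : H) (hx : x = u - ρ⁻¹ • gradient f x)
    (hx' : x' = u - ρ⁻¹ • gradient f x') : x = x' := by
  have h1 : x + ρ⁻¹ • gradient f x = u := eq_sub_iff_add_eq.mp hx
  have h1' : x' + ρ⁻¹ • gradient f x' = u := eq_sub_iff_add_eq.mp hx'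
  have key : x + ρ⁻¹ • gradient f x = x' + ρ⁻¹ • gradient f x' := h1.trans h1'.symm
  have hdiff : x - x' = -(ρ⁻¹ • (gradient f x - gradient f x')) := by
    rw [smul_sub, neg_sub, sub_eq_sub_iff_add_eq_add]
    rw [key]; abel
  have h2 : ‖x - x'‖^2 = ⟪x - x', x - x'⟫ := (real_inner_self_eq_norm_sq _).symm
  have h3 : ⟪x - x', x - x'⟫ = -(ρ⁻¹ * ⟪gradient f x - gradient f x', x - x'⟫) := by
    nth_rewrite 1 [hdiff]
    rw [inner_neg_left, real_inner_smul_left]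
  have h4 := aux_mono f hc hd x x'
  have h5 : ‖x - x'‖^2 ≤ 0 := by
    rw [h2, h3]
    have : 0 ≤ ρ⁻¹ * ⟪gradient f x - gradient f x', x - x'⟫ :=
      mul_nonneg (inv_nonneg.2 hρ.le) h4
    linarith
  have h6 : ‖x - x'‖ = 0 := by nlinarith [norm_nonneg (x - x'), sq_nonneg ‖x-x'‖]
  have := norm_sub_eq_zero_iff.mp h6
  exact this
end auxlemmas



lemma indicator_comp_int {Ω : Type*} [MeasurableSpace Ω] (Pr : Measure Ω) [IsProbabilityMeasure Pr]
    {n : ℕ} (A : Set Ω) (hA : MeasurableSet A) (X : Ω → Fin n) (hX : Measurable X)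
    (φ : Fin n → ℝ) :
    ∫ ω, A.indicator (fun ω => φ (X ω)) ω ∂Pr = ∑ i, (Pr (A ∩ X ⁻¹' {i})).toReal * φ i := by
  have hrw : (fun ω => A.indicator (fun ω => φ (X ω)) ω)
      = fun ω => ∑ i, (A ∩ X ⁻¹' {i}).indicator (fun _ => φ i) ω := by
    funext ω
    by_cases hω : ω ∈ A
    · rw [Set.indicator_of_mem hω]
      rw [Finset.sum_eq_single (X ω)]
      · rw [Set.indicator_of_mem (by exact ⟨hω, rfl⟩)]
      · intro i _ hi
        exact Set.indicator_of_notMem (fun hmem => hi (by simpa using hmem.2.symm)) _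
      · intro h; exact absurd (Finset.mem_univ _) h
    · rw [Set.indicator_of_notMem hω]
      symm
      apply Finset.sum_eq_zero
      intro i _
      exact Set.indicator_of_notMem (fun hmem => hω hmem.1) _
  rw [hrw, integral_finset_sum]
  · refine Finset.sum_congr rfl fun i _ => ?_
    rw [integral_indicator_const _ (hA.inter (hX (measurableSet_singleton i)))]
    simp [mul_comm, measureReal_def]
  · intro i _
    exact (integrable_const (φ i)).indicator (hA.inter (hX (measurableSet_singleton i)))

lemma comp_int {Ω : Type*} [MeasurableSpace Ω] (Pr : Measure Ω) [IsProbabilityMeasure Pr]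
    {n : ℕ} (X : Ω → Fin n) (hX : Measurable X) (φ : Fin n → ℝ) :
    ∫ ω, φ (X ω) ∂Pr = ∑ i, (Pr (X ⁻¹' {i})).toReal * φ i := by
  have := indicator_comp_int Pr Set.univ MeasurableSet.univ X hX φ
  simpa using this

lemma int_of_bound {Ω : Type*} [MeasurableSpace Ω] (Pr : Measure Ω) [IsProbabilityMeasure Pr]
    {g : Ω → ℝ} (hg : Measurable g) {B : ℝ} (hB : ∀ ω, |g ω| ≤ B) : Integrable g Pr := by
  refine Integrable.mono' (integrable_const B) hg.aestronglyMeasurable ?_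
  exact Filter.Eventually.of_forall fun ω => by simpa [Real.norm_eq_abs] using hB ω



lemma atom_indep {Ω : Type*} [MeasurableSpace Ω] (Pr : Measure Ω) [IsProbabilityMeasure Pr]
    {n : ℕ} (ξ : ℕ → Ω → Fin n) (hξmeas : ∀ k, Measurable (ξ k))
    (hξindep : ProbabilityTheory.iIndepFun ξ Pr)
    {k : ℕ} (hk : 1 ≤ k) (w : Fin (k-1) → Fin n) (i : Fin n) :
    Pr ({ω | ∀ j : Fin (k-1), ξ (j.1+1) ω = w j} ∩ ξ k ⁻¹' {i})
      = Pr {ω | ∀ j : Fin (k-1), ξ (j.1+1) ω = w j} * Pr (ξ k ⁻¹' {i}) := by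
  classical
  set s : ℕ → Set Ω := fun j =>
    if h : 1 ≤ j ∧ j ≤ k-1 then ξ j ⁻¹' {w ⟨j-1, by omega⟩} else ξ k ⁻¹' {i} with hs
  have hsm : ∀ S : Finset ℕ, (∀ j ∈ S, 1 ≤ j ∧ j ≤ k) → ∀ j ∈ S,
      MeasurableSet[MeasurableSpace.comap (ξ j) inferInstance] (s j) := by
    intro S hS j hj
    by_cases hc : 1 ≤ j ∧ j ≤ k-1
    · refine ⟨{w ⟨j-1, by omega⟩}, trivial, ?_⟩
      rw [hs]; simp [dif_pos hc]
    · have hjk : j = k := by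
        have := hS j hj; omega
      subst hjk
      refine ⟨{i}, trivial, ?_⟩
      rw [hs]; simp [dif_neg hc]
  have hA : {ω | ∀ j : Fin (k-1), ξ (j.1+1) ω = w j} = ⋂ j ∈ Finset.Icc 1 (k-1), s j := by
    ext ω
    simp only [Set.mem_iInter, Finset.mem_Icc, Set.mem_setOf_eq]
    constructor
    · intro h j hj
      have hc : 1 ≤ j ∧ j ≤ k-1 := hj
      rw [hs]
      simp only [dif_pos hc, Set.mem_preimage, Set.mem_singleton_iff]
      have h2 := h ⟨j-1, by omega⟩
      simpa [Nat.sub_add_cancel hc.1] using h2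
    · intro h j
      have hc : 1 ≤ j.1+1 ∧ j.1+1 ≤ k-1 := ⟨by omega, by omega⟩
      have h2 := h (j.1+1) hc
      rw [hs] at h2
      simp only [dif_pos hc, Set.mem_preimage, Set.mem_singleton_iff] at h2
      rw [h2]
      congr 1

  have hicc : Finset.Icc 1 k = insert k (Finset.Icc 1 (k-1)) := by
    ext j
    simp only [Finset.mem_Icc, Finset.mem_insert]
    omega
  have hknotmem : k ∉ Finset.Icc 1 (k-1) := by simp; omega
  have hsk : s k = ξ k ⁻¹' {i} := by
    rw [hs]; simp only [dif_neg (by omega : ¬(1 ≤ k ∧ k ≤ k-1))]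
  have hAB : {ω | ∀ j : Fin (k-1), ξ (j.1+1) ω = w j} ∩ ξ k ⁻¹' {i}
      = ⋂ j ∈ Finset.Icc 1 k, s j := by
    rw [hicc, Finset.set_biInter_insert, hA, hsk, Set.inter_comm]
  have h1 := hξindep.meas_biInter (S := Finset.Icc 1 k)
    (hsm _ (fun j hj => ⟨(Finset.mem_Icc.mp hj).1, (Finset.mem_Icc.mp hj).2⟩))
  have h2 := hξindep.meas_biInter (S := Finset.Icc 1 (k-1))
    (hsm _ (fun j hj => by have := Finset.mem_Icc.mp hj; omega))
  rw [hAB, h1, hA, h2, hicc, Finset.prod_insert hknotmem, hsk, mul_comm]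

set_option maxHeartbeats 1000000 in
/-- Proposition 2(a): the projected iterates of the stochastic proximal distance algorithm satisfy E‖P_C(θ_k) − θ*‖² ≤ r². -/
theorem stmt_7 {p n : ℕ} (hn : 1 ≤ n)
    (f : Fin n → EuclideanSpace ℝ (Fin p) → ℝ)
    (hfconv : ∀ i, ConvexOn ℝ Set.univ (f i))
    (hfdiff : ∀ i, Differentiable ℝ (f i))
    (L : ℝ) (hL : 0 < L)
    (hLip : ∀ i x y, ‖gradient (f i) x - gradient (f i) y‖ ≤ L * ‖x - y‖)
    (F : EuclideanSpace ℝ (Fin p) → ℝ)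
    (hF : ∀ θ', F θ' = (1 / n : ℝ) * ∑ i, f i θ')
    (hFcont : Continuous F) (hFstrict : StrictConvexOn ℝ Set.univ F)
    (hFcoercive : Tendsto F (comap norm atTop) atTop)
    (C : Set (EuclideanSpace ℝ (Fin p)))
    (hCne : C.Nonempty) (hCclosed : IsClosed C) (hCconv : Convex ℝ C)
    (P : EuclideanSpace ℝ (Fin p) → EuclideanSpace ℝ (Fin p))
    (hP : ∀ x, P x ∈ C ∧ ∀ y ∈ C, ‖x - P x‖ ≤ ‖x - y‖)
    (θstar : EuclideanSpace ℝ (Fin p))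
    (hθstar : θstar ∈ C ∧ ∀ θ' ∈ C, F θstar ≤ F θ')
    (ρ₁ γ : ℝ) (hρ₁ : 0 < ρ₁) (hγ : 1 / 2 < γ ∧ γ ≤ 1)
    (ρ : ℕ → ℝ) (hρ : ∀ k : ℕ, ρ k = ρ₁ * (k : ℝ) ^ γ)
    {Ω : Type*} [MeasurableSpace Ω] (Pr : Measure Ω) [IsProbabilityMeasure Pr]
    (ξ : ℕ → Ω → Fin n) (hξmeas : ∀ k, Measurable (ξ k))
    (hξindep : ProbabilityTheory.iIndepFun ξ Pr)
    (hξunif : ∀ k, 1 ≤ k → ∀ i : Fin n, Pr {ω | ξ k ω = i} = (n : ENNReal)⁻¹)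
    (θ₀ : EuclideanSpace ℝ (Fin p))
    (θ : ℕ → Ω → EuclideanSpace ℝ (Fin p))
    (hθ0 : ∀ ω, θ 0 ω = θ₀) (hθmeas : ∀ k, Measurable (θ k))
    (hupdate : ∀ k, 1 ≤ k → ∀ ω,
      θ k ω = P (θ (k - 1) ω) - (ρ k)⁻¹ • gradient (f (ξ k ω)) (θ k ω))
    (G s r : ℝ) (hGnn : 0 ≤ G) (hrnn : 0 ≤ r)
    (hG : G ^ 2 = (1 / n : ℝ) * ∑ i, ‖gradient (f i) θstar‖ ^ 2)
    (hs : s = ∑' k : ℕ, ((k : ℝ) + 1) ^ (-(2 * γ)))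
    (hr : r ^ 2 = Real.exp (4 * L ^ 2 * s / ρ₁ ^ 2) *
      (4 * G ^ 2 * s / ρ₁ ^ 2 + ‖P θ₀ - θstar‖ ^ 2)) :
    ∀ k : ℕ, (∫ ω, ‖P (θ k ω) - θstar‖ ^ 2 ∂Pr) ≤ r ^ 2 := by
  classical
  have hn0 : (0:ℝ) < n := by exact_mod_cast hn
  have hρpos : ∀ k : ℕ, 1 ≤ k → 0 < ρ k := by
    intro k hk
    rw [hρ]
    exact mul_pos hρ₁ (Real.rpow_pos_of_pos (by exact_mod_cast hk) γ)
  -- projection characterization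
  have hchar : ∀ x : EuclideanSpace ℝ (Fin p), ∀ z ∈ C, ⟪x - P x, z - P x⟫ ≤ 0 := by
    intro x z hz
    set u := x - P x with hu
    set v := z - P x with hv
    have hc : HasDerivAt (fun t : ℝ => u - t • v) (-v) 0 := by
      simpa using (((hasDerivAt_id (0:ℝ)).smul_const v).const_sub u)
    have hg : HasDerivAt (fun t : ℝ => ⟪u - t • v, u - t • v⟫) (-(2*⟪u,v⟫)) 0 := by
      have := hc.inner ℝ hc
      simp only [zero_smul, sub_zero] at this
      refine this.congr_deriv ?_
      rw [inner_neg_right, inner_neg_left, real_inner_comm v u]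
      ring
    have hmin : ∀ t ∈ Set.Ioc (0:ℝ) 1, ⟪u - (0:ℝ) • v, u - (0:ℝ) • v⟫ ≤ ⟪u - t • v, u - t • v⟫ := by
      intro t ht
      have hmem : (1-t) • P x + t • z ∈ C :=
        hCconv (hP x).1 hz (by linarith [ht.2]) ht.1.le (by ring)
      have hvec : x - ((1-t) • P x + t • z) = u - t • v := by
        rw [hu, hv]; module
      have hle := (hP x).2 _ hmem
      rw [hvec] at hle
      have h0 : u - (0:ℝ) • v = x - P x := by rw [hu]; module
      rw [h0, real_inner_self_eq_norm_sq, real_inner_self_eq_norm_sq]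
      exact pow_le_pow_left₀ (norm_nonneg _) hle 2
    have := aux_deriv_nonneg hg hmin
    linarith
  have hsqle : ∀ x : EuclideanSpace ℝ (Fin p), ‖P x - θstar‖^2 ≤ ‖x - θstar‖^2 := by
    intro x
    have hc := hchar x θstar hθstar.1
    have hdec : x - θstar = (x - P x) + (P x - θstar) := by abel
    have e : ‖x - θstar‖^2 = ‖x - P x‖^2 + 2*⟪x - P x, P x - θstar⟫ + ‖P x - θstar‖^2 := by
      rw [hdec, norm_add_sq_real]
    have e2 : ⟪x - P x, P x - θstar⟫ = -⟪x - P x, θstar - P x⟫ := by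
      rw [show P x - θstar = -(θstar - P x) by abel, inner_neg_right]
    nlinarith [sq_nonneg ‖x - P x‖]
  have hPle : ∀ x : EuclideanSpace ℝ (Fin p), ‖P x - θstar‖ ≤ ‖x - θstar‖ := by
    intro x
    exact le_of_pow_le_pow_left₀ two_ne_zero (norm_nonneg _) (hsqle x)
  -- P is 1-Lipschitz hence measurable
  have hPlip : LipschitzWith 1 P := by
    apply LipschitzWith.of_dist_le_mul
    intro x y
    rw [dist_eq_norm, dist_eq_norm]
    have h1 := hchar x (P y) (hP y).1
    have h2 := hchar y (P x) (hP x).1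
    have hdec : x - y = (x - P x) + (P x - P y) + (P y - y) := by abel
    have e : ⟪x - y, P x - P y⟫
        = ⟪x - P x, P x - P y⟫ + ⟪P x - P y, P x - P y⟫ + ⟪P y - y, P x - P y⟫ := by
      rw [hdec, inner_add_left, inner_add_left]
    have e1 : ⟪x - P x, P x - P y⟫ = -⟪x - P x, P y - P x⟫ := by
      rw [show P x - P y = -(P y - P x) by abel, inner_neg_right]
    have e2 : ⟪P y - y, P x - P y⟫ = -⟪y - P y, P x - P y⟫ := by
      rw [show P y - y = -(y - P y) by abel, inner_neg_left]
    have key : ‖P x - P y‖^2 ≤ ⟪x - y, P x - P y⟫ := by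
      rw [e, e1, e2]
      have := real_inner_self_eq_norm_sq (P x - P y)
      linarith
    have hcs : ⟪x - y, P x - P y⟫ ≤ ‖x - y‖ * ‖P x - P y‖ := real_inner_le_norm _ _
    rcases eq_or_lt_of_le (norm_nonneg (P x - P y)) with h0 | h0
    · rw [← h0]; positivity
    · have : ‖P x - P y‖ * ‖P x - P y‖ ≤ ‖x - y‖ * ‖P x - P y‖ := by nlinarith
      have := le_of_mul_le_mul_right this h0
      simpa using this
  have hPmeas : Measurable P := hPlip.continuous.measurable
  -- variational inequality
  have hVI : ∀ y ∈ C, 0 ≤ ∑ i, ⟪gradient (f i) θstar, y - θstar⟫ := by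
    intro y hy
    set d := y - θstar with hd
    have hder : HasDerivAt (fun t : ℝ => ∑ i, f i (θstar + t • d))
        (∑ i, ⟪gradient (f i) θstar, d⟫) 0 := by
      have h0 := HasDerivAt.fun_sum (fun i (_ : i ∈ Finset.univ) =>
        line_hasDerivAt (f i) (hfdiff i) θstar d 0)
      simpa using h0
    apply aux_deriv_nonneg hder
    intro t ht
    have hmem : θstar + t • d ∈ C := by
      have hmem' : (1-t) • θstar + t • y ∈ C :=
        hCconv hθstar.1 hy (by linarith [ht.2]) ht.1.le (by ring)
      have : θstar + t • d = (1-t) • θstar + t • y := by rw [hd]; module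
      rw [this]; exact hmem'
    have hF1 : ∀ z : EuclideanSpace ℝ (Fin p), ∑ i, f i z = n * F z := by
      intro z
      rw [hF z]
      field_simp
    rw [hF1, hF1]
    have h0d : θstar + (0:ℝ) • d = θstar := by module
    rw [h0d]
    exact mul_le_mul_of_nonneg_left (hθstar.2 _ hmem) hn0.le
  -- θ k is determined by ξ 1 .. ξ k
  have hdet : ∀ k : ℕ, ∀ ω ω' : Ω, (∀ j, 1 ≤ j → j ≤ k → ξ j ω = ξ j ω') → θ k ω = θ k ω' := by
    intro k
    induction k with
    | zero => intro ω ω' _; rw [hθ0, hθ0]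
    | succ m ih =>
      intro ω ω' hagree
      have h1 := hupdate (m+1) (by omega) ω
      have h2 := hupdate (m+1) (by omega) ω'
      simp only [Nat.add_sub_cancel] at h1 h2
      have hθm : θ m ω = θ m ω' := ih ω ω' (fun j hj1 hj2 => hagree j hj1 (by omega))
      have hξm : ξ (m+1) ω = ξ (m+1) ω' := hagree (m+1) (by omega) le_rfl
      rw [hθm, hξm] at h1
      exact implicit_unique (f (ξ (m+1) ω')) (hfconv _) (hfdiff _)
        (hρpos (m+1) (by omega)) _ _ _ h1 h2
  -- uniform bound on gradient norms at θstar
  set M : ℝ := ∑ i, ‖gradient (f i) θstar‖ with hM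
  have hMi : ∀ i, ‖gradient (f i) θstar‖ ≤ M := by
    intro i
    exact Finset.single_le_sum (f := fun j => ‖gradient (f j) θstar‖)
      (fun j _ => norm_nonneg _) (Finset.mem_univ i)
  have hM0 : 0 ≤ M := Finset.sum_nonneg (fun j _ => norm_nonneg _)
  -- boundedness of the iterates
  have hbd : ∀ k : ℕ, ∃ B : ℝ, 0 ≤ B ∧ ∀ ω, ‖P (θ k ω) - θstar‖ ≤ B := by
    intro k
    induction k with
    | zero => exact ⟨‖P θ₀ - θstar‖, norm_nonneg _, fun ω => by rw [hθ0]⟩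
    | succ m ih =>
      obtain ⟨B, hB0, hB⟩ := ih
      have hρm := hρpos (m+1) (by omega)
      refine ⟨B + (ρ (m+1))⁻¹ * M,
        add_nonneg hB0 (mul_nonneg (inv_nonneg.2 hρm.le) hM0), fun ω => ?_⟩
      have h1 := hupdate (m+1) (by omega) ω
      simp only [Nat.add_sub_cancel] at h1
      have h2 := step_ineq2 (f (ξ (m+1) ω)) (hfconv _) (hfdiff _) hρm
        (θ (m+1) ω) (P (θ m ω)) θstar h1
      calc ‖P (θ (m+1) ω) - θstar‖ ≤ ‖θ (m+1) ω - θstar‖ := hPle _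
        _ ≤ ‖P (θ m ω) - θstar‖ + (ρ (m+1))⁻¹ * ‖gradient (f (ξ (m+1) ω)) θstar‖ := h2
        _ ≤ B + (ρ (m+1))⁻¹ * M :=
          add_le_add (hB ω) (mul_le_mul_of_nonneg_left (hMi _) (inv_nonneg.2 hρm.le))
  have hvmeas : ∀ k : ℕ, Measurable (fun ω => P (θ k ω) - θstar) := by
    intro k
    exact (hPmeas.comp (hθmeas k)).sub measurable_const
  -- the key one-step inequality in expectation
  have KEY : ∀ k : ℕ, 1 ≤ k →
      (∫ ω, ‖P (θ k ω) - θstar‖^2 ∂Pr)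
        ≤ (∫ ω, ‖P (θ (k-1) ω) - θstar‖^2 ∂Pr) + G^2 * ((ρ k)⁻¹)^2 := by
    intro k hk
    have hρk := hρpos k hk
    have hc0 : (0:ℝ) ≤ (ρ k)⁻¹ := inv_nonneg.2 hρk.le
    obtain ⟨B, hB0, hB⟩ := hbd (k-1)
    obtain ⟨B', hB'0, hB'⟩ := hbd k
    -- pointwise inequality
    have hpt : ∀ ω, ‖P (θ k ω) - θstar‖^2 ≤ ‖P (θ (k-1) ω) - θstar‖^2
        - 2*(ρ k)⁻¹*⟪gradient (f (ξ k ω)) θstar, P (θ (k-1) ω) - θstar⟫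
        + ((ρ k)⁻¹)^2*‖gradient (f (ξ k ω)) θstar‖^2 := by
      intro ω
      have h1 := hupdate k hk ω
      have h2 := step_ineq (f (ξ k ω)) (hfconv _) (hfdiff _) hρk
        (θ k ω) (P (θ (k-1) ω)) θstar h1
      have h3 := hsqle (θ k ω)
      linarith
    -- measurability
    have hgradmeas : Measurable (fun ω => gradient (f (ξ k ω)) θstar) :=
      (Measurable.of_discrete (f := fun i => gradient (f i) θstar)).comp (hξmeas k)
    have hhm : Measurable (fun ω => ⟪gradient (f (ξ k ω)) θstar, P (θ (k-1) ω) - θstar⟫) :=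
      hgradmeas.inner (hvmeas (k-1))
    have hqm : Measurable (fun ω => ‖gradient (f (ξ k ω)) θstar‖^2) :=
      (hgradmeas.norm).pow_const 2
    -- integrability
    have int_head : Integrable (fun ω => ‖P (θ k ω) - θstar‖^2) Pr := by
      refine int_of_bound Pr (((hvmeas k).norm).pow_const 2) (B := B'^2) ?_
      intro ω
      rw [abs_of_nonneg (by positivity)]
      exact pow_le_pow_left₀ (norm_nonneg _) (hB' ω) 2
    have int_v2 : Integrable (fun ω => ‖P (θ (k-1) ω) - θstar‖^2) Pr := by
      refine int_of_bound Pr (((hvmeas (k-1)).norm).pow_const 2) (B := B^2) ?_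
      intro ω
      rw [abs_of_nonneg (by positivity)]
      exact pow_le_pow_left₀ (norm_nonneg _) (hB ω) 2
    have int_h : Integrable (fun ω => ⟪gradient (f (ξ k ω)) θstar, P (θ (k-1) ω) - θstar⟫) Pr := by
      refine int_of_bound Pr hhm (B := M*B) ?_
      intro ω
      calc |⟪gradient (f (ξ k ω)) θstar, P (θ (k-1) ω) - θstar⟫|
          ≤ ‖gradient (f (ξ k ω)) θstar‖ * ‖P (θ (k-1) ω) - θstar‖ := abs_real_inner_le_norm _ _
        _ ≤ M * B := mul_le_mul (hMi _) (hB ω) (norm_nonneg _) hM0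
    have int_q : Integrable (fun ω => ‖gradient (f (ξ k ω)) θstar‖^2) Pr := by
      refine int_of_bound Pr hqm (B := M^2) ?_
      intro ω
      rw [abs_of_nonneg (by positivity)]
      exact pow_le_pow_left₀ (norm_nonneg _) (hMi _) 2
    have int_rhs : Integrable (fun ω => ‖P (θ (k-1) ω) - θstar‖^2
        - 2*(ρ k)⁻¹*⟪gradient (f (ξ k ω)) θstar, P (θ (k-1) ω) - θstar⟫
        + ((ρ k)⁻¹)^2*‖gradient (f (ξ k ω)) θstar‖^2) Pr :=
      (int_v2.sub (int_h.const_mul _)).add (int_q.const_mul _)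
    -- integral of the q-term equals G²
    have hq_int : (∫ ω, ‖gradient (f (ξ k ω)) θstar‖^2 ∂Pr) = G^2 := by
      rw [comp_int Pr (ξ k) (hξmeas k) (fun i => ‖gradient (f i) θstar‖^2)]
      have hPri : ∀ i : Fin n, (Pr (ξ k ⁻¹' {i})).toReal = (n:ℝ)⁻¹ := by
        intro i
        have h1 : ξ k ⁻¹' {i} = {ω | ξ k ω = i} := rfl
        rw [h1, hξunif k hk i, ENNReal.toReal_inv]
        simp
      rw [hG]
      rw [Finset.sum_congr rfl (fun i _ => by rw [hPri i])]
      rw [← Finset.mul_sum, one_div]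
    -- the cross term has nonnegative integral
    have hh_nonneg : 0 ≤ ∫ ω, ⟪gradient (f (ξ k ω)) θstar, P (θ (k-1) ω) - θstar⟫ ∂Pr := by
      set Atom : (Fin (k-1) → Fin n) → Set Ω :=
        fun w => {ω | ∀ j : Fin (k-1), ξ (j.1+1) ω = w j} with hAtom
      have hAmeas : ∀ w, MeasurableSet (Atom w) := by
        intro w
        have : Atom w = ⋂ j : Fin (k-1), ξ (j.1+1) ⁻¹' {w j} := by
          ext ω; simp [hAtom, Set.mem_iInter]
        rw [this]
        exact MeasurableSet.iInter (fun j => hξmeas _ (measurableSet_singleton _))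
      have hdecomp : (fun ω => ⟪gradient (f (ξ k ω)) θstar, P (θ (k-1) ω) - θstar⟫)
          = fun ω => ∑ w : Fin (k-1) → Fin n,
            (Atom w).indicator
              (fun ω => ⟪gradient (f (ξ k ω)) θstar, P (θ (k-1) ω) - θstar⟫) ω := by
        funext ω
        symm
        rw [Finset.sum_eq_single (fun j : Fin (k-1) => ξ (j.1+1) ω)]
        · have hmem : ω ∈ Atom (fun j : Fin (k-1) => ξ (j.1+1) ω) := fun j => rfl
          exact Set.indicator_of_mem hmem _
        · intro w _ hw
          refine Set.indicator_of_notMem (fun hmem => hw ?_) _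
          funext j; exact (hmem j).symm
        · intro hmem; exact absurd (Finset.mem_univ _) hmem
      rw [hdecomp, integral_finset_sum _ (fun w _ => int_h.indicator (hAmeas w))]
      apply Finset.sum_nonneg
      intro w _
      by_cases hemp : Atom w = ∅
      · simp [hemp]
      · obtain ⟨ω₀, hω₀⟩ := Set.nonempty_iff_ne_empty.2 hemp
        have hconst : ∀ ω ∈ Atom w, θ (k-1) ω = θ (k-1) ω₀ := by
          intro ω hω
          apply hdet (k-1) ω ω₀
          intro j hj1 hj2
          have e1 := hω ⟨j-1, by omega⟩
          have e2 := hω₀ ⟨j-1, by omega⟩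
          simp only at e1 e2
          have hj : j - 1 + 1 = j := by omega
          rw [hj] at e1 e2
          rw [e1, e2]
        have hrw : (Atom w).indicator
              (fun ω => ⟪gradient (f (ξ k ω)) θstar, P (θ (k-1) ω) - θstar⟫)
            = (Atom w).indicator
              (fun ω => (fun i => ⟪gradient (f i) θstar, P (θ (k-1) ω₀) - θstar⟫) (ξ k ω)) := by
          funext ω
          by_cases hω : ω ∈ Atom w
          · rw [Set.indicator_of_mem hω, Set.indicator_of_mem hω]
            simp only
            rw [hconst ω hω]
          · rw [Set.indicator_of_notMem hω, Set.indicator_of_notMem hω]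
        rw [hrw, indicator_comp_int Pr (Atom w) (hAmeas w) (ξ k) (hξmeas k)
          (fun i => ⟪gradient (f i) θstar, P (θ (k-1) ω₀) - θstar⟫)]
        have hPr2 : ∀ i : Fin n, (Pr (Atom w ∩ ξ k ⁻¹' {i})).toReal
            = (Pr (Atom w)).toReal * (n:ℝ)⁻¹ := by
          intro i
          have h1 := atom_indep Pr ξ hξmeas hξindep hk w i
          have h2 : Pr (ξ k ⁻¹' {i}) = (n:ENNReal)⁻¹ := hξunif k hk i
          have hAw : Atom w = {ω | ∀ j : Fin (k-1), ξ (j.1+1) ω = w j} := rfl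
          rw [hAw, h1, h2, ENNReal.toReal_mul, ENNReal.toReal_inv]
          rw [← hAw]
          simp
        have hfactor : ∑ i, (Pr (Atom w ∩ ξ k ⁻¹' {i})).toReal
              * ⟪gradient (f i) θstar, P (θ (k-1) ω₀) - θstar⟫
            = (Pr (Atom w)).toReal * (n:ℝ)⁻¹
              * ∑ i, ⟪gradient (f i) θstar, P (θ (k-1) ω₀) - θstar⟫ := by
          rw [Finset.mul_sum]
          exact Finset.sum_congr rfl fun i _ => by rw [hPr2 i]
        rw [hfactor]
        have hvy := hVI (P (θ (k-1) ω₀)) ((hP _).1)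
        have h0 : (0:ℝ) ≤ (Pr (Atom w)).toReal * (n:ℝ)⁻¹ :=
          mul_nonneg ENNReal.toReal_nonneg (by positivity)
        exact mul_nonneg h0 hvy
    -- put everything together
    have hmono := integral_mono int_head int_rhs hpt
    have hsplit : (∫ ω, (‖P (θ (k-1) ω) - θstar‖^2
        - 2*(ρ k)⁻¹*⟪gradient (f (ξ k ω)) θstar, P (θ (k-1) ω) - θstar⟫
        + ((ρ k)⁻¹)^2*‖gradient (f (ξ k ω)) θstar‖^2) ∂Pr)
        = (∫ ω, ‖P (θ (k-1) ω) - θstar‖^2 ∂Pr)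
          - (2*(ρ k)⁻¹) * (∫ ω, ⟪gradient (f (ξ k ω)) θstar, P (θ (k-1) ω) - θstar⟫ ∂Pr)
          + ((ρ k)⁻¹)^2 * (∫ ω, ‖gradient (f (ξ k ω)) θstar‖^2 ∂Pr) := by
      have i1 : Integrable (fun ω => ‖P (θ (k-1) ω) - θstar‖^2
          - 2*(ρ k)⁻¹*⟪gradient (f (ξ k ω)) θstar, P (θ (k-1) ω) - θstar⟫) Pr :=
        int_v2.sub (int_h.const_mul _)
      have i2 : Integrable (fun ω =>
          ((ρ k)⁻¹)^2*‖gradient (f (ξ k ω)) θstar‖^2) Pr := int_q.const_mul _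
      rw [integral_add i1 i2, integral_sub int_v2 (int_h.const_mul _),
        integral_const_mul, integral_const_mul]
    rw [hsplit, hq_int] at hmono
    have hdrop : (0:ℝ) ≤ (2*(ρ k)⁻¹)
        * (∫ ω, ⟪gradient (f (ξ k ω)) θstar, P (θ (k-1) ω) - θstar⟫ ∂Pr) :=
      mul_nonneg (by positivity) hh_nonneg
    calc (∫ ω, ‖P (θ k ω) - θstar‖^2 ∂Pr) ≤ _ := hmono
      _ ≤ (∫ ω, ‖P (θ (k-1) ω) - θstar‖^2 ∂Pr) + G^2 * ((ρ k)⁻¹)^2 := by linarith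
  -- iterate the key inequality
  have hγ1 : 1/2 < γ := hγ.1
  have hchain : ∀ k : ℕ, (∫ ω, ‖P (θ k ω) - θstar‖^2 ∂Pr)
      ≤ (∫ ω, ‖P (θ 0 ω) - θstar‖^2 ∂Pr)
        + G^2 * ∑ j ∈ Finset.range k, ((ρ (j+1))⁻¹)^2 := by
    intro k
    induction k with
    | zero => simp
    | succ m ih =>
      have hkey := KEY (m+1) (by omega)
      simp only [Nat.add_sub_cancel] at hkey
      rw [Finset.sum_range_succ, mul_add]
      linarith
  have hterm : ∀ j : ℕ, ((ρ (j+1))⁻¹)^2 = (ρ₁⁻¹)^2 * ((j:ℝ)+1)^(-(2*γ)) := by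
    intro j
    have hx : (0:ℝ) < (j:ℝ)+1 := by positivity
    rw [hρ (j+1)]
    push_cast
    rw [mul_inv, mul_pow]
    congr 1
    rw [inv_pow, ← Real.rpow_natCast (((j:ℝ)+1)^γ) 2, ← Real.rpow_mul hx.le,
      ← Real.rpow_neg hx.le]
    norm_num
    ring_nf
  have hsummable : Summable (fun j : ℕ => ((j:ℝ)+1)^(-(2*γ))) := by
    have h1 : Summable (fun j : ℕ => ((j:ℝ))^(-(2*γ))) := by
      rw [Real.summable_nat_rpow]
      linarith
    have h2 := (summable_nat_add_iff 1).2 h1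
    exact h2.congr fun j => by push_cast; ring_nf
  have hpartial : ∀ k : ℕ, ∑ j ∈ Finset.range k, ((j:ℝ)+1)^(-(2*γ)) ≤ s := by
    intro k
    rw [hs]
    exact Summable.sum_le_tsum _ (fun j _ => Real.rpow_nonneg (by positivity) _) hsummable
  have hs0 : 0 ≤ s := by
    rw [hs]
    exact tsum_nonneg (fun j => Real.rpow_nonneg (by positivity) _)
  have hA0 : (∫ ω, ‖P (θ 0 ω) - θstar‖^2 ∂Pr) = ‖P θ₀ - θstar‖^2 := by
    have : (fun ω => ‖P (θ 0 ω) - θstar‖^2) = fun _ : Ω => ‖P θ₀ - θstar‖^2 := by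
      funext ω; rw [hθ0]
    rw [this, integral_const]
    simp
  intro k
  have h1 := hchain k
  rw [hA0] at h1
  have h2 : ∑ j ∈ Finset.range k, ((ρ (j+1))⁻¹)^2 ≤ (ρ₁⁻¹)^2 * s := by
    have : ∑ j ∈ Finset.range k, ((ρ (j+1))⁻¹)^2
        = (ρ₁⁻¹)^2 * ∑ j ∈ Finset.range k, ((j:ℝ)+1)^(-(2*γ)) := by
      rw [Finset.mul_sum]
      exact Finset.sum_congr rfl fun j _ => hterm j
    rw [this]
    exact mul_le_mul_of_nonneg_left (hpartial k) (by positivity)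
  have h3 : (∫ ω, ‖P (θ k ω) - θstar‖^2 ∂Pr)
      ≤ ‖P θ₀ - θstar‖^2 + G^2 * ((ρ₁⁻¹)^2 * s) := by
    have := mul_le_mul_of_nonneg_left h2 (by positivity : (0:ℝ) ≤ G^2)
    linarith
  have hexp : 1 ≤ Real.exp (4 * L^2 * s / ρ₁^2) := by
    apply Real.one_le_exp
    apply div_nonneg _ (by positivity)
    have : (0:ℝ) ≤ 4 * L^2 := by positivity
    exact mul_nonneg this hs0
  have hX0 : 0 ≤ 4 * G^2 * s / ρ₁^2 + ‖P θ₀ - θstar‖^2 := by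
    have : (0:ℝ) ≤ 4 * G^2 * s / ρ₁^2 :=
      div_nonneg (mul_nonneg (by positivity) hs0) (by positivity)
    positivity
  have hr2 : 4 * G^2 * s / ρ₁^2 + ‖P θ₀ - θstar‖^2 ≤ r^2 := by
    rw [hr]
    nlinarith [hX0, hexp]
  have hfin : ‖P θ₀ - θstar‖^2 + G^2 * ((ρ₁⁻¹)^2 * s)
      ≤ 4 * G^2 * s / ρ₁^2 + ‖P θ₀ - θstar‖^2 := by
    rw [div_eq_mul_inv, ← inv_pow]
    have h4 : (0:ℝ) ≤ G^2 * ((ρ₁⁻¹)^2 * s) := by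
      apply mul_nonneg (by positivity)
      exact mul_nonneg (by positivity) hs0
    nlinarith [h4]
  linarith
end

section
/- Under the stochastic proximal distance setup, for every k ≥ 1, E[‖∇f_{ξ_k}(P_C(θ_{k−1}))‖²] ≤ 2(G² + r²L²) = c². -/
open MeasureTheory Filter Real

open Topology RealInnerProductSpace ProbabilityTheory


section SPDAux

variable {E : Type*} [NormedAddCommGroup E] [InnerProductSpace ℝ E] [CompleteSpace E]



lemma spd_inner_gradient {f : E → ℝ} {x : E} (hf : DifferentiableAt ℝ f x) (v : E) :
    ⟪gradient f x, v⟫ = fderiv ℝ f x v := by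
  rw [gradient, InnerProductSpace.toDual_symm_apply]

lemma spd_hasDerivAt_line {f : E → ℝ} (hf : Differentiable ℝ f) (x d : E) (t : ℝ) :
    HasDerivAt (fun s : ℝ => f (x + s • d)) (⟪gradient f (x + t • d), d⟫) t := by
  have h1 : HasDerivAt (fun s : ℝ => x + s • d) d t := by
    simpa using ((hasDerivAt_id t).smul_const d).const_add x
  have h2 := ((hf (x + t • d)).hasFDerivAt).comp_hasDerivAt t h1
  rw [spd_inner_gradient (hf _)]
  exact h2

/-- Subgradient inequality for differentiable convex functions. -/
lemma spd_subgrad {f : E → ℝ} (hconv : ConvexOn ℝ Set.univ f) (hdiff : Differentiable ℝ f)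
    (x y : E) : f x + ⟪gradient f x, y - x⟫ ≤ f y := by
  set d := y - x with hd
  have hline : ∀ t : ℝ, x + t • d = AffineMap.lineMap x y t := by
    intro t
    rw [AffineMap.lineMap_apply]
    simp [hd, add_comm]
  have hg : ConvexOn ℝ Set.univ (fun t : ℝ => f (x + t • d)) := by
    have := hconv.comp_affineMap (AffineMap.lineMap x y)
    have hpre : (AffineMap.lineMap x y : ℝ →ᵃ[ℝ] E) ⁻¹' Set.univ = Set.univ := by simp
    rw [hpre] at this
    refine this.congr (fun t _ => ?_)
    simp [Function.comp, hline]
  have hder : HasDerivAt (fun s : ℝ => f (x + s • d)) (⟪gradient f x, d⟫) 0 := by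
    have := spd_hasDerivAt_line hdiff x d 0
    simpa using this
  have hslope := hg.le_slope_of_hasDerivAt (Set.mem_univ (0:ℝ)) (Set.mem_univ (1:ℝ))
    one_pos hder
  have : slope (fun s : ℝ => f (x + s • d)) 0 1 = f y - f x := by
    simp [slope, hd]
  rw [this] at hslope
  linarith

/-- Monotonicity of gradients of convex functions. -/
lemma spd_grad_mono {f : E → ℝ} (hconv : ConvexOn ℝ Set.univ f) (hdiff : Differentiable ℝ f)
    (x y : E) : 0 ≤ ⟪gradient f x - gradient f y, x - y⟫ := by
  have h1 := spd_subgrad hconv hdiff x y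
  have h2 := spd_subgrad hconv hdiff y x
  have : (y - x) = -(x - y) := by abel
  rw [inner_sub_left]
  rw [this, inner_neg_right] at h1
  linarith

/-- If φ has derivative D at 0 and 0 is a min on (0,1], then D ≥ 0. -/
lemma spd_deriv_nonneg_of_min {φ : ℝ → ℝ} {D : ℝ} (hd : HasDerivAt φ D 0)
    (hmin : ∀ t ∈ Set.Ioc (0:ℝ) 1, φ 0 ≤ φ t) : 0 ≤ D := by
  have ht : Tendsto (slope φ 0) (𝓝[>] 0) (𝓝 D) :=
    (hasDerivAt_iff_tendsto_slope.1 hd).mono_left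
      (nhdsWithin_mono 0 (fun t ht => ne_of_gt ht))
  refine ge_of_tendsto ht ?_
  filter_upwards [Ioc_mem_nhdsGT_of_mem (Set.mem_Ico.2 ⟨le_refl 0, one_pos⟩)] with t ht
  have h0 := hmin t ht
  have h1 : slope φ 0 t = (φ t - φ 0) / t := by
    simp [slope, div_eq_inv_mul]
  rw [h1]
  exact div_nonneg (by linarith) (le_of_lt ht.1)



/-- Variational inequality for the metric projection onto a convex set. -/
lemma spd_proj_var {C : Set E} (hCconv : Convex ℝ C)
    (P : E → E) (hP : ∀ x, P x ∈ C ∧ ∀ y ∈ C, ‖x - P x‖ ≤ ‖x - y‖)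
    (x w : E) (hw : w ∈ C) : ⟪x - P x, w - P x⟫ ≤ 0 := by
  set a := x - P x with ha
  set b := w - P x with hb
  set I := ⟪a, b⟫ with hI
  have hφeq : ∀ t : ℝ, ‖x - (P x + t • (w - P x))‖ ^ 2
      = ‖a‖ ^ 2 - (2 * I) * t + ‖b‖ ^ 2 * t ^ 2 := by
    intro t
    have : x - (P x + t • (w - P x)) = a - t • b := by rw [ha, hb]; abel
    rw [this, norm_sub_sq_real, real_inner_smul_right, norm_smul]
    simp [mul_pow]
    ring
  have hder : HasDerivAt (fun t : ℝ => ‖a‖ ^ 2 - (2 * I) * t + ‖b‖ ^ 2 * t ^ 2)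
      (-(2 * I)) 0 := by
    have h1 : HasDerivAt (fun t : ℝ => ‖a‖ ^ 2 - (2 * I) * t) (-(2*I)) 0 := by
      simpa using (((hasDerivAt_id (0:ℝ)).const_mul (2*I)).const_sub (‖a‖^2))
    have h2 : HasDerivAt (fun t : ℝ => ‖b‖ ^ 2 * t ^ 2) 0 0 := by
      simpa using (hasDerivAt_pow 2 (0:ℝ)).const_mul (‖b‖^2)
    simpa using h1.fun_add h2
  have hmin : ∀ t ∈ Set.Ioc (0:ℝ) 1,
      (fun t : ℝ => ‖a‖ ^ 2 - (2 * I) * t + ‖b‖ ^ 2 * t ^ 2) 0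
        ≤ (fun t : ℝ => ‖a‖ ^ 2 - (2 * I) * t + ‖b‖ ^ 2 * t ^ 2) t := by
    intro t ht
    have hz : P x + t • (w - P x) ∈ C := by
      have := hCconv (hP x).1 hw (by linarith [ht.2] : (0:ℝ) ≤ 1 - t)
        (le_of_lt ht.1) (by ring)
      convert this using 1
      module
    have hle := (hP x).2 _ hz
    have hsq : ‖x - P x‖ ^ 2 ≤ ‖x - (P x + t • (w - P x))‖ ^ 2 :=
      pow_le_pow_left₀ (norm_nonneg _) hle 2
    rw [hφeq t] at hsq
    simpa using hsq
  have := spd_deriv_nonneg_of_min hder hmin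
  linarith

/-- The metric projection is nonexpansive. -/
lemma spd_proj_nonexp {C : Set E} (hCconv : Convex ℝ C)
    (P : E → E) (hP : ∀ x, P x ∈ C ∧ ∀ y ∈ C, ‖x - P x‖ ≤ ‖x - y‖)
    (x y : E) : ‖P x - P y‖ ≤ ‖x - y‖ := by
  have h1 : ⟪x - P x, P y - P x⟫ ≤ 0 := spd_proj_var hCconv P hP x (P y) (hP y).1
  have h2 : ⟪y - P y, P x - P y⟫ ≤ 0 := spd_proj_var hCconv P hP y (P x) (hP x).1
  have key : ‖P x - P y‖ ^ 2 ≤ ⟪x - y, P x - P y⟫ := by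
    have e1 : ⟪P x - P y, P x - P y⟫ - ⟪x - y, P x - P y⟫
        = ⟪x - P x, P y - P x⟫ + ⟪y - P y, P x - P y⟫ := by
      rw [← inner_sub_left]
      have : (P x - P y) - (x - y) = -(x - P x) + (y - P y) := by abel
      rw [this, inner_add_left, inner_neg_left]
      have : (P y - P x) = -(P x - P y) := by abel
      rw [this, inner_neg_right]
    have e2 : ⟪P x - P y, P x - P y⟫ = ‖P x - P y‖ ^ 2 := real_inner_self_eq_norm_sq _
    linarith
  have h3 : ⟪x - y, P x - P y⟫ ≤ ‖x - y‖ * ‖P x - P y‖ := real_inner_le_norm _ _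
  rcases eq_or_lt_of_le (norm_nonneg (P x - P y)) with h0 | h0
  · rw [← h0]; exact norm_nonneg _
  · have : ‖P x - P y‖ * ‖P x - P y‖ ≤ ‖x - y‖ * ‖P x - P y‖ := by
      nlinarith
    exact le_of_mul_le_mul_right this h0


/-- Splitting an integral along the independent index `ξ m`. -/
lemma spd_split {Ω : Type*} [MeasurableSpace Ω] (Pr : Measure Ω) [IsProbabilityMeasure Pr]
    {n : ℕ} (hn : 1 ≤ n) (ξ : ℕ → Ω → Fin n) (hξmeas : ∀ k, Measurable (ξ k))
    (hξindep : ProbabilityTheory.iIndepFun ξ Pr)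
    (hξunif : ∀ k, 1 ≤ k → ∀ i : Fin n, Pr {ω | ξ k ω = i} = (n : ENNReal)⁻¹)
    (m : ℕ) (hm : 1 ≤ m) (X : Ω → ℝ) (hXmeas : Measurable X) (B : ℝ) (hXbd : ∀ ω, |X ω| ≤ B)
    (hdet : ∀ ω ω', (∀ j, j < m → ξ j ω = ξ j ω') → X ω = X ω') (i : Fin n) :
    ∫ ω, (if ξ m ω = i then X ω else 0) ∂Pr = (1 / n : ℝ) * ∫ ω, X ω ∂Pr := by
  classical
  set S : Finset ℕ := Finset.range m with hS
  set T : Finset ℕ := {m} with hT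
  have hST : Disjoint S T := by
    simp [hS, hT, Finset.disjoint_singleton_right]
  have hIF := hξindep.indepFun_finset S T hST hξmeas
  set φ : ((j : S) → Fin n) → ℝ :=
    fun v => if h : ∃ ω, (fun j : S => ξ j ω) = v then X h.choose else 0 with hφ
  set ψ : ((j : T) → Fin n) → ℝ :=
    fun v => if v ⟨m, Finset.mem_singleton_self m⟩ = i then (1:ℝ) else 0 with hψ
  have hφm : Measurable φ := measurable_of_countable φ
  have hψm : Measurable ψ := measurable_of_countable ψ
  have hcomp : IndepFun (fun ω => φ (fun j : S => ξ j ω))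
      (fun ω => ψ (fun j : T => ξ j ω)) Pr := hIF.comp hφm hψm
  have hXeq : (fun ω => φ (fun j : S => ξ j ω)) = X := by
    funext ω
    have hex : ∃ ω', (fun j : S => ξ j ω') = (fun j : S => ξ j ω) := ⟨ω, rfl⟩
    simp only [hφ, dif_pos hex]
    apply hdet
    intro j hj
    have hmem : j ∈ S := by simp [hS, hj]
    exact congrFun hex.choose_spec ⟨j, hmem⟩
  have hYeq : (fun ω => ψ (fun j : T => ξ j ω)) = (fun ω => if ξ m ω = i then (1:ℝ) else 0) := by
    funext ω
    simp [hψ]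
  rw [hXeq, hYeq] at hcomp
  have hprod : (fun ω => if ξ m ω = i then X ω else 0)
      = X * (fun ω => if ξ m ω = i then (1:ℝ) else 0) := by
    funext ω
    by_cases h : ξ m ω = i <;> simp [h]
  have hsmeas : MeasurableSet {ω | ξ m ω = i} := (hξmeas m) (measurableSet_singleton i)
  have hYmeas : Measurable (fun ω => if ξ m ω = i then (1:ℝ) else 0) :=
    Measurable.ite hsmeas measurable_const measurable_const
  rw [hprod, hcomp.integral_mul_eq_mul_integral hXmeas.aestronglyMeasurable hYmeas.aestronglyMeasurable]
  have hYint : ∫ ω, (if ξ m ω = i then (1:ℝ) else 0) ∂Pr = (1 / n : ℝ) := by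
    have : (fun ω => if ξ m ω = i then (1:ℝ) else 0)
        = Set.indicator {ω | ξ m ω = i} (fun _ => (1:ℝ)) := by
      funext ω
      by_cases h : ξ m ω = i <;> simp [Set.indicator_apply, h]
    rw [this, integral_indicator_const (1:ℝ) hsmeas, measureReal_def, hξunif m hm i]
    have hn0 : (n : ℝ) ≠ 0 := by positivity
    simp [ENNReal.toReal_inv, one_div]
  rw [hYint]
  ring

end SPDAux

set_option maxHeartbeats 1000000 in
/-- Proposition 2(b): E‖∇f_{ξ_k}(P_C(θ_{k−1}))‖² ≤ c² = 2(G² + r²L²). -/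
theorem stmt_8 {p n : ℕ} (hn : 1 ≤ n)
    (f : Fin n → EuclideanSpace ℝ (Fin p) → ℝ)
    (hfconv : ∀ i, ConvexOn ℝ Set.univ (f i))
    (hfdiff : ∀ i, Differentiable ℝ (f i))
    (L : ℝ) (hL : 0 < L)
    (hLip : ∀ i x y, ‖gradient (f i) x - gradient (f i) y‖ ≤ L * ‖x - y‖)
    (F : EuclideanSpace ℝ (Fin p) → ℝ)
    (hF : ∀ θ', F θ' = (1 / n : ℝ) * ∑ i, f i θ')
    (hFcont : Continuous F) (hFstrict : StrictConvexOn ℝ Set.univ F)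
    (hFcoercive : Tendsto F (comap norm atTop) atTop)
    (C : Set (EuclideanSpace ℝ (Fin p)))
    (hCne : C.Nonempty) (hCclosed : IsClosed C) (hCconv : Convex ℝ C)
    (P : EuclideanSpace ℝ (Fin p) → EuclideanSpace ℝ (Fin p))
    (hP : ∀ x, P x ∈ C ∧ ∀ y ∈ C, ‖x - P x‖ ≤ ‖x - y‖)
    (θstar : EuclideanSpace ℝ (Fin p))
    (hθstar : θstar ∈ C ∧ ∀ θ' ∈ C, F θstar ≤ F θ')
    (ρ₁ γ : ℝ) (hρ₁ : 0 < ρ₁) (hγ : 1 / 2 < γ ∧ γ ≤ 1)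
    (ρ : ℕ → ℝ) (hρ : ∀ k : ℕ, ρ k = ρ₁ * (k : ℝ) ^ γ)
    {Ω : Type*} [MeasurableSpace Ω] (Pr : Measure Ω) [IsProbabilityMeasure Pr]
    (ξ : ℕ → Ω → Fin n) (hξmeas : ∀ k, Measurable (ξ k))
    (hξindep : ProbabilityTheory.iIndepFun ξ Pr)
    (hξunif : ∀ k, 1 ≤ k → ∀ i : Fin n, Pr {ω | ξ k ω = i} = (n : ENNReal)⁻¹)
    (θ₀ : EuclideanSpace ℝ (Fin p))
    (θ : ℕ → Ω → EuclideanSpace ℝ (Fin p))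
    (hθ0 : ∀ ω, θ 0 ω = θ₀) (hθmeas : ∀ k, Measurable (θ k))
    (hupdate : ∀ k, 1 ≤ k → ∀ ω,
      θ k ω = P (θ (k - 1) ω) - (ρ k)⁻¹ • gradient (f (ξ k ω)) (θ k ω))
    (G s r : ℝ) (hGnn : 0 ≤ G) (hrnn : 0 ≤ r)
    (hG : G ^ 2 = (1 / n : ℝ) * ∑ i, ‖gradient (f i) θstar‖ ^ 2)
    (hs : s = ∑' k : ℕ, ((k : ℝ) + 1) ^ (-(2 * γ)))
    (hr : r ^ 2 = Real.exp (4 * L ^ 2 * s / ρ₁ ^ 2) *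
      (4 * G ^ 2 * s / ρ₁ ^ 2 + ‖P θ₀ - θstar‖ ^ 2))
    (c : ℝ) (hcnn : 0 ≤ c) (hc : c ^ 2 = 2 * (G ^ 2 + r ^ 2 * L ^ 2)) :
    ∀ k : ℕ, 1 ≤ k →
      (∫ ω, ‖gradient (f (ξ k ω)) (P (θ (k - 1) ω))‖ ^ 2 ∂Pr) ≤ c ^ 2 := by

  classical
  have hn0 : (0:ℝ) < n := by exact_mod_cast hn
  have hρpos : ∀ m : ℕ, 1 ≤ m → 0 < ρ m := by
    intro m hm
    rw [hρ]
    have hm' : (0:ℝ) < (m:ℝ) := by exact_mod_cast hm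
    positivity
  -- projection facts
  have hnonexp := spd_proj_nonexp hCconv P hP
  have hPfix : P θstar = θstar := by
    have h := (hP θstar).2 θstar hθstar.1
    rw [sub_self, norm_zero] at h
    have h2 : ‖θstar - P θstar‖ = 0 := le_antisymm h (norm_nonneg _)
    exact (sub_eq_zero.1 (norm_eq_zero.1 h2)).symm
  have hPdist : ∀ x, ‖P x - θstar‖ ≤ ‖x - θstar‖ := fun x => by
    simpa [hPfix] using hnonexp x θstar
  have hPcont : Continuous P := by
    refine (LipschitzWith.of_dist_le_mul (K := 1) ?_).continuous
    intro x y
    rw [dist_eq_norm, dist_eq_norm]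
    simpa using hnonexp x y
  have hgradcont : ∀ i, Continuous (gradient (f i)) := by
    intro i
    refine (LipschitzWith.of_dist_le_mul (K := L.toNNReal) ?_).continuous
    intro x y
    rw [dist_eq_norm, dist_eq_norm, Real.coe_toNNReal L hL.le]
    exact hLip i x y
  -- θ m ω is determined by ξ_1 ... ξ_m
  have hdetθ : ∀ m (ω ω' : Ω), (∀ j, 1 ≤ j → j ≤ m → ξ j ω = ξ j ω') → θ m ω = θ m ω' := by
    intro m
    induction m with
    | zero => intro ω ω' _; rw [hθ0, hθ0]
    | succ m ih =>
      intro ω ω' hj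
      have hθm : θ m ω = θ m ω' := ih ω ω' (fun j h1 h2 => hj j h1 (le_trans h2 (Nat.le_succ m)))
      have hξm : ξ (m+1) ω = ξ (m+1) ω' := hj (m+1) (by omega) le_rfl
      have h1 := hupdate (m+1) (by omega) ω
      have h2 := hupdate (m+1) (by omega) ω'
      simp only [Nat.add_sub_cancel] at h1 h2
      rw [← hξm, ← hθm] at h2
      set i := ξ (m+1) ω with hi
      set u := θ (m+1) ω with hu
      set v := θ (m+1) ω' with hv
      have hsub : u - v = -((ρ (m+1))⁻¹ • (gradient (f i) u - gradient (f i) v)) := by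
        conv_lhs => rw [h1, h2]
        rw [smul_sub]
        abel
      have hmono := spd_grad_mono (hfconv i) (hfdiff i) u v
      have hρp := hρpos (m+1) (by omega)
      have hsq : ‖u - v‖^2 ≤ 0 := by
        rw [← real_inner_self_eq_norm_sq]
        nth_rewrite 1 [hsub]
        rw [inner_neg_left, real_inner_smul_left]
        have hnn : 0 ≤ (ρ (m+1))⁻¹ * ⟪gradient (f i) u - gradient (f i) v, u - v⟫ :=
          mul_nonneg (inv_pos.2 hρp).le hmono
        linarith
      have h0 : ‖u - v‖ = 0 := by nlinarith [norm_nonneg (u - v)]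
      exact sub_eq_zero.1 (norm_eq_zero.1 h0)
  -- key pointwise inequality
  have hkey : ∀ m, 1 ≤ m → ∀ ω, ‖θ m ω - θstar‖ ≤
      ‖(P (θ (m-1) ω) - θstar) - (ρ m)⁻¹ • gradient (f (ξ m ω)) θstar‖ := by
    intro m hm ω
    have hup := hupdate m hm ω
    have hρp := hρpos m hm
    set i := ξ m ω with hi
    set x := θ m ω with hx
    have hmono := spd_grad_mono (hfconv i) (hfdiff i) x θstar
    set v := x - θstar with hv
    set w := (P (θ (m-1) ω) - θstar) - (ρ m)⁻¹ • gradient (f i) θstar with hw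
    have hvw : v = w - (ρ m)⁻¹ • (gradient (f i) x - gradient (f i) θstar) := by
      rw [hv, hw]
      nth_rewrite 1 [hup]
      rw [smul_sub]
      abel
    have h1 : ‖v‖^2 ≤ ⟪w, v⟫ := by
      rw [← real_inner_self_eq_norm_sq]
      nth_rewrite 1 [hvw]
      rw [inner_sub_left, real_inner_smul_left]
      have hnn : 0 ≤ (ρ m)⁻¹ * ⟪gradient (f i) x - gradient (f i) θstar, v⟫ :=
        mul_nonneg (inv_pos.2 hρp).le hmono
      linarith
    have h2 : ⟪w, v⟫ ≤ ‖w‖ * ‖v‖ := real_inner_le_norm _ _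
    rcases eq_or_lt_of_le (norm_nonneg v) with h0 | h0
    · rw [← h0]
      exact norm_nonneg w
    · nlinarith
  -- bound on the gradients at θstar
  have hGsum : ∑ i, ‖gradient (f i) θstar‖^2 = n * G^2 := by
    rw [hG]
    field_simp
  have hGb : ∀ i, ‖gradient (f i) θstar‖ ≤ Real.sqrt n * G := by
    intro i
    have h1 : ‖gradient (f i) θstar‖^2 ≤ n * G^2 := by
      rw [← hGsum]
      exact Finset.single_le_sum (f := fun j => ‖gradient (f j) θstar‖^2)
        (fun j _ => sq_nonneg _) (Finset.mem_univ i)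
    have h2 : (Real.sqrt n * G)^2 = n * G^2 := by
      rw [mul_pow, Real.sq_sqrt hn0.le]
    nlinarith [norm_nonneg (gradient (f i) θstar),
      mul_nonneg (Real.sqrt_nonneg (n:ℝ)) hGnn]
  have hGbnn : 0 ≤ Real.sqrt n * G := mul_nonneg (Real.sqrt_nonneg _) hGnn
  -- uniform bounds
  have habd : ∀ m, ∃ B : ℝ, 0 ≤ B ∧ ∀ ω, ‖P (θ m ω) - θstar‖ ≤ B := by
    intro m
    induction m with
    | zero => exact ⟨‖P θ₀ - θstar‖, norm_nonneg _, fun ω => by rw [hθ0]⟩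
    | succ m ih =>
      obtain ⟨B, hB0, hB⟩ := ih
      have hρp := hρpos (m+1) (by omega)
      have hinv : (0:ℝ) ≤ (ρ (m+1))⁻¹ := (inv_pos.2 hρp).le
      refine ⟨B + (ρ (m+1))⁻¹ * (Real.sqrt n * G), by positivity, fun ω => ?_⟩
      have h1 := hPdist (θ (m+1) ω)
      have h2 := hkey (m+1) (by omega) ω
      simp only [Nat.add_sub_cancel] at h2
      have h3 : ‖(P (θ m ω) - θstar) - (ρ (m+1))⁻¹ • gradient (f (ξ (m+1) ω)) θstar‖
          ≤ ‖P (θ m ω) - θstar‖ + (ρ (m+1))⁻¹ * ‖gradient (f (ξ (m+1) ω)) θstar‖ := by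
        calc ‖(P (θ m ω) - θstar) - (ρ (m+1))⁻¹ • gradient (f (ξ (m+1) ω)) θstar‖
            ≤ ‖P (θ m ω) - θstar‖ + ‖(ρ (m+1))⁻¹ • gradient (f (ξ (m+1) ω)) θstar‖ :=
              norm_sub_le _ _
          _ = ‖P (θ m ω) - θstar‖ + (ρ (m+1))⁻¹ * ‖gradient (f (ξ (m+1) ω)) θstar‖ := by
              rw [norm_smul, Real.norm_eq_abs, abs_of_nonneg hinv]
      have h4 := hGb (ξ (m+1) ω)
      have h5 := hB ω
      nlinarith [mul_le_mul_of_nonneg_left h4 hinv]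
  -- measurability
  have hPmeas : ∀ m, Measurable (fun ω => P (θ m ω)) :=
    fun m => hPcont.measurable.comp (hθmeas m)
  have humeas : ∀ m, Measurable (fun ω => P (θ m ω) - θstar) :=
    fun m => (hPmeas m).sub measurable_const
  have hanormsq : ∀ m, Measurable (fun ω => ‖P (θ m ω) - θstar‖^2) :=
    fun m => ((humeas m).norm).pow_const 2
  -- integrability helper
  have hintb : ∀ (X : Ω → ℝ) (B : ℝ), Measurable X → (∀ ω, |X ω| ≤ B) → Integrable X Pr :=
    fun X B hm hb => (integrable_const B).mono' hm.aestronglyMeasurable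
      (ae_of_all _ (by simpa [Real.norm_eq_abs] using hb))
  have haint : ∀ m, Integrable (fun ω => ‖P (θ m ω) - θstar‖^2) Pr := by
    intro m
    obtain ⟨B, hB0, hB⟩ := habd m
    refine hintb _ (B^2) (hanormsq m) (fun ω => ?_)
    rw [abs_of_nonneg (sq_nonneg _)]
    exact pow_le_pow_left₀ (norm_nonneg _) (hB ω) 2
  -- first order optimality
  have hfoc : ∀ w, w ∈ C → 0 ≤ ∑ i, ⟪gradient (f i) θstar, w - θstar⟫ := by
    intro w hw
    have hder : HasDerivAt (fun t : ℝ => (1 / n : ℝ) * ∑ i, f i (θstar + t • (w - θstar)))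
        ((1 / n : ℝ) * ∑ i, ⟪gradient (f i) θstar, w - θstar⟫) 0 := by
      refine HasDerivAt.const_mul _ ?_
      refine HasDerivAt.fun_sum (fun i _ => ?_)
      have := spd_hasDerivAt_line (hfdiff i) θstar (w - θstar) 0
      simpa using this
    have hmin : ∀ t ∈ Set.Ioc (0:ℝ) 1,
        (fun t : ℝ => (1 / n : ℝ) * ∑ i, f i (θstar + t • (w - θstar))) 0
          ≤ (fun t : ℝ => (1 / n : ℝ) * ∑ i, f i (θstar + t • (w - θstar))) t := by
      intro t ht
      have hmem : θstar + t • (w - θstar) ∈ C := by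
        have := hCconv hθstar.1 hw (by linarith [ht.2] : (0:ℝ) ≤ 1 - t) ht.1.le (by ring)
        convert this using 1
        module
      have hle := hθstar.2 _ hmem
      rw [hF θstar, hF (θstar + t • (w - θstar))] at hle
      simpa using hle
    have hD := spd_deriv_nonneg_of_min hder hmin
    have h1n : (0:ℝ) < 1/n := by positivity
    nlinarith
  -- the main recursion
  have hrecA : ∀ m, 1 ≤ m → (∫ ω, ‖P (θ m ω) - θstar‖^2 ∂Pr)
      ≤ (∫ ω, ‖P (θ (m-1) ω) - θstar‖^2 ∂Pr) + ((ρ m)⁻¹)^2 * G^2 := by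
    intro m hm
    obtain ⟨B, hB0, hB⟩ := habd (m-1)
    have hρp := hρpos m hm
    have hinv0 : (0:ℝ) ≤ (ρ m)⁻¹ := (inv_pos.2 hρp).le
    have hgmeas : Measurable (fun ω => gradient (f (ξ m ω)) θstar) :=
      (measurable_of_countable (fun i : Fin n => gradient (f i) θstar)).comp (hξmeas m)
    have hWmeas : Measurable (fun ω => ⟪P (θ (m-1) ω) - θstar, gradient (f (ξ m ω)) θstar⟫) :=
      (humeas (m-1)).inner hgmeas
    have hWbd : ∀ ω, |⟪P (θ (m-1) ω) - θstar, gradient (f (ξ m ω)) θstar⟫| ≤ B * (Real.sqrt n * G) := by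
      intro ω
      calc |⟪P (θ (m-1) ω) - θstar, gradient (f (ξ m ω)) θstar⟫|
          ≤ ‖P (θ (m-1) ω) - θstar‖ * ‖gradient (f (ξ m ω)) θstar‖ := abs_real_inner_le_norm _ _
        _ ≤ B * (Real.sqrt n * G) := mul_le_mul (hB ω) (hGb _) (norm_nonneg _) hB0
    have hVmeas : Measurable (fun ω => ‖gradient (f (ξ m ω)) θstar‖^2) :=
      (measurable_of_countable (fun i : Fin n => ‖gradient (f i) θstar‖^2)).comp (hξmeas m)
    have hVbd : ∀ ω, |‖gradient (f (ξ m ω)) θstar‖^2| ≤ (Real.sqrt n * G)^2 := by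
      intro ω
      rw [abs_of_nonneg (sq_nonneg _)]
      exact pow_le_pow_left₀ (norm_nonneg _) (hGb _) 2
    have hWint := hintb _ (B*(Real.sqrt n * G)) hWmeas hWbd
    have hVint := hintb _ ((Real.sqrt n * G)^2) hVmeas hVbd
    -- pointwise inequality
    have hpt : ∀ ω, ‖P (θ m ω) - θstar‖^2
        ≤ ‖P (θ (m-1) ω) - θstar‖^2
          - 2*(ρ m)⁻¹ * ⟪P (θ (m-1) ω) - θstar, gradient (f (ξ m ω)) θstar⟫
          + ((ρ m)⁻¹)^2 * ‖gradient (f (ξ m ω)) θstar‖^2 := by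
      intro ω
      have h1 := hPdist (θ m ω)
      have h2 := hkey m hm ω
      have h4 : ‖P (θ m ω) - θstar‖
          ≤ ‖(P (θ (m-1) ω) - θstar) - (ρ m)⁻¹ • gradient (f (ξ m ω)) θstar‖ :=
        le_trans h1 h2
      have h3 : ‖(P (θ (m-1) ω) - θstar) - (ρ m)⁻¹ • gradient (f (ξ m ω)) θstar‖^2
          = ‖P (θ (m-1) ω) - θstar‖^2
            - 2*(ρ m)⁻¹ * ⟪P (θ (m-1) ω) - θstar, gradient (f (ξ m ω)) θstar⟫
            + ((ρ m)⁻¹)^2 * ‖gradient (f (ξ m ω)) θstar‖^2 := by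
        rw [norm_sub_sq_real, real_inner_smul_right, norm_smul, Real.norm_eq_abs,
          abs_of_nonneg hinv0, mul_pow]
        ring
      calc ‖P (θ m ω) - θstar‖^2
          ≤ ‖(P (θ (m-1) ω) - θstar) - (ρ m)⁻¹ • gradient (f (ξ m ω)) θstar‖^2 :=
            pow_le_pow_left₀ (norm_nonneg _) h4 2
        _ = _ := h3
    have hmain : (∫ ω, ‖P (θ m ω) - θstar‖^2 ∂Pr)
        ≤ ∫ ω, (‖P (θ (m-1) ω) - θstar‖^2
            - 2*(ρ m)⁻¹ * ⟪P (θ (m-1) ω) - θstar, gradient (f (ξ m ω)) θstar⟫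
            + ((ρ m)⁻¹)^2 * ‖gradient (f (ξ m ω)) θstar‖^2) ∂Pr :=
      integral_mono (haint m)
        (((haint (m-1)).sub (hWint.const_mul _)).add (hVint.const_mul _)) hpt
    have hI1 : Integrable (fun ω => ‖P (θ (m-1) ω) - θstar‖^2
        - 2*(ρ m)⁻¹ * ⟪P (θ (m-1) ω) - θstar, gradient (f (ξ m ω)) θstar⟫) Pr :=
      (haint (m-1)).sub (hWint.const_mul _)
    have hI2 : Integrable (fun ω => ((ρ m)⁻¹)^2 * ‖gradient (f (ξ m ω)) θstar‖^2) Pr :=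
      hVint.const_mul _
    have hI3 : Integrable (fun ω => 2*(ρ m)⁻¹
        * ⟪P (θ (m-1) ω) - θstar, gradient (f (ξ m ω)) θstar⟫) Pr :=
      hWint.const_mul _
    rw [integral_add hI1 hI2, integral_sub (haint (m-1)) hI3,
      integral_const_mul _ _, integral_const_mul _ _] at hmain
    -- the cross term has nonnegative integral
    have hXmeas : ∀ i : Fin n, Measurable (fun ω => ⟪P (θ (m-1) ω) - θstar, gradient (f i) θstar⟫) :=
      fun i => (humeas (m-1)).inner measurable_const
    have hXbd : ∀ (i : Fin n) ω, |⟪P (θ (m-1) ω) - θstar, gradient (f i) θstar⟫| ≤ B * (Real.sqrt n * G) := by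
      intro i ω
      calc |⟪P (θ (m-1) ω) - θstar, gradient (f i) θstar⟫|
          ≤ ‖P (θ (m-1) ω) - θstar‖ * ‖gradient (f i) θstar‖ := abs_real_inner_le_norm _ _
        _ ≤ B * (Real.sqrt n * G) := mul_le_mul (hB ω) (hGb _) (norm_nonneg _) hB0
    have hXint : ∀ i : Fin n, Integrable (fun ω => ⟪P (θ (m-1) ω) - θstar, gradient (f i) θstar⟫) Pr :=
      fun i => hintb _ (B*(Real.sqrt n * G)) (hXmeas i) (hXbd i)
    have hitemeasW : ∀ i : Fin n,
        Measurable (fun ω => if ξ m ω = i then ⟪P (θ (m-1) ω) - θstar, gradient (f i) θstar⟫ else 0) :=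
      fun i => Measurable.ite ((hξmeas m) (measurableSet_singleton i)) (hXmeas i) measurable_const
    have hitebdW : ∀ (i : Fin n) ω,
        |(if ξ m ω = i then ⟪P (θ (m-1) ω) - θstar, gradient (f i) θstar⟫ else 0)| ≤ B * (Real.sqrt n * G) := by
      intro i ω
      by_cases h : ξ m ω = i
      · simpa [h] using hXbd i ω
      · simp [h]
        positivity
    have hdetu : ∀ (i : Fin n) (ω ω' : Ω), (∀ j, j < m → ξ j ω = ξ j ω') →
        ⟪P (θ (m-1) ω) - θstar, gradient (f i) θstar⟫
          = ⟪P (θ (m-1) ω') - θstar, gradient (f i) θstar⟫ := by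
      intro i ω ω' hjj
      have : θ (m-1) ω = θ (m-1) ω' := hdetθ (m-1) ω ω' (fun j hj1 hj2 => hjj j (by omega))
      rw [this]
    have hWsplit : ∀ i : Fin n,
        (∫ ω, (if ξ m ω = i then ⟪P (θ (m-1) ω) - θstar, gradient (f i) θstar⟫ else 0) ∂Pr)
          = (1/n : ℝ) * ∫ ω, ⟪P (θ (m-1) ω) - θstar, gradient (f i) θstar⟫ ∂Pr :=
      fun i => spd_split Pr hn ξ hξmeas hξindep hξunif m hm _
        (hXmeas i) (B*(Real.sqrt n * G)) (hXbd i) (hdetu i) i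
    have hWsum : (fun ω => ⟪P (θ (m-1) ω) - θstar, gradient (f (ξ m ω)) θstar⟫)
        = fun ω => ∑ i, (if ξ m ω = i then ⟪P (θ (m-1) ω) - θstar, gradient (f i) θstar⟫ else 0) := by
      funext ω
      simp
    have hWnn : 0 ≤ ∫ ω, ⟪P (θ (m-1) ω) - θstar, gradient (f (ξ m ω)) θstar⟫ ∂Pr := by
      rw [hWsum, integral_finset_sum _
        (fun i _ => hintb _ (B*(Real.sqrt n * G)) (hitemeasW i) (hitebdW i))]
      have hstep : ∑ i : Fin n,
          (∫ ω, (if ξ m ω = i then ⟪P (θ (m-1) ω) - θstar, gradient (f i) θstar⟫ else 0) ∂Pr)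
            = (1/n : ℝ) * ∫ ω, (∑ i, ⟪P (θ (m-1) ω) - θstar, gradient (f i) θstar⟫) ∂Pr := by
        rw [integral_finset_sum _ (fun i _ => hXint i), Finset.mul_sum]
        exact Finset.sum_congr rfl (fun i _ => hWsplit i)
      rw [hstep]
      have hptnn : ∀ ω, 0 ≤ ∑ i, ⟪P (θ (m-1) ω) - θstar, gradient (f i) θstar⟫ := by
        intro ω
        have h := hfoc (P (θ (m-1) ω)) (hP _).1
        have he : (∑ i, ⟪P (θ (m-1) ω) - θstar, gradient (f i) θstar⟫)
            = ∑ i, ⟪gradient (f i) θstar, P (θ (m-1) ω) - θstar⟫ :=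
          Finset.sum_congr rfl (fun i _ => real_inner_comm _ _)
        rw [he]
        exact h
      have h1n : (0:ℝ) ≤ 1/n := by positivity
      exact mul_nonneg h1n (integral_nonneg hptnn)
    -- the variance term
    have hVval : (∫ ω, ‖gradient (f (ξ m ω)) θstar‖^2 ∂Pr) = G^2 := by
      have hVsum : (fun ω => ‖gradient (f (ξ m ω)) θstar‖^2)
          = fun ω => ∑ i, (if ξ m ω = i then ‖gradient (f i) θstar‖^2 else 0) := by
        funext ω
        simp
      have hitemeasV : ∀ i : Fin n,
          Measurable (fun ω => if ξ m ω = i then ‖gradient (f i) θstar‖^2 else 0) :=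
        fun i => Measurable.ite ((hξmeas m) (measurableSet_singleton i))
          measurable_const measurable_const
      have hitebdV : ∀ (i : Fin n) ω,
          |(if ξ m ω = i then ‖gradient (f i) θstar‖^2 else 0)| ≤ (Real.sqrt n * G)^2 := by
        intro i ω
        by_cases h : ξ m ω = i
        · rw [if_pos h, abs_of_nonneg (sq_nonneg _)]
          exact pow_le_pow_left₀ (norm_nonneg _) (hGb _) 2
        · simp [h]
          positivity
      rw [hVsum, integral_finset_sum _
        (fun i _ => hintb _ ((Real.sqrt n * G)^2) (hitemeasV i) (hitebdV i))]
      have hsplitV : ∀ i : Fin n,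
          (∫ ω, (if ξ m ω = i then ‖gradient (f i) θstar‖^2 else 0) ∂Pr)
            = (1/n : ℝ) * ‖gradient (f i) θstar‖^2 := by
        intro i
        have := spd_split Pr hn ξ hξmeas hξindep hξunif m hm
          (fun _ => ‖gradient (f i) θstar‖^2) measurable_const ((Real.sqrt n * G)^2)
          (fun ω => by
            rw [abs_of_nonneg (sq_nonneg _)]
            exact pow_le_pow_left₀ (norm_nonneg _) (hGb i) 2)
          (fun _ _ _ => rfl) i
        rw [this, integral_const]
        simp
      rw [Finset.sum_congr rfl (fun i _ => hsplitV i), ← Finset.mul_sum, hGsum]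
      field_simp
    rw [hVval] at hmain
    have hcross : 0 ≤ 2*(ρ m)⁻¹ * ∫ ω, ⟪P (θ (m-1) ω) - θstar, gradient (f (ξ m ω)) θstar⟫ ∂Pr := by
      have : (0:ℝ) ≤ 2*(ρ m)⁻¹ := by positivity
      exact mul_nonneg this hWnn
    linarith
  -- explicit bound via partial sums
  have hAband : ∀ m, (∫ ω, ‖P (θ m ω) - θstar‖^2 ∂Pr)
      ≤ ‖P θ₀ - θstar‖^2 + G^2/ρ₁^2 * ∑ j ∈ Finset.range m, ((j:ℝ)+1)^(-(2*γ)) := by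
    intro m
    induction m with
    | zero =>
      simp only [Finset.range_zero, Finset.sum_empty, mul_zero, add_zero]
      have he : (fun ω => ‖P (θ 0 ω) - θstar‖^2) = fun _ : Ω => ‖P θ₀ - θstar‖^2 :=
        funext fun ω => by rw [hθ0]
      rw [he, integral_const]
      simp
    | succ m ih =>
      have h1 := hrecA (m+1) (by omega)
      simp only [Nat.add_sub_cancel] at h1
      have h2 : ((ρ (m+1))⁻¹)^2 * G^2 = G^2/ρ₁^2 * ((m:ℝ)+1)^(-(2*γ)) := by
        have hx : (0:ℝ) < ((m:ℝ)+1) := by positivity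
        have hxc : ((m+1:ℕ):ℝ) = (m:ℝ)+1 := by push_cast; ring
        have h3 : (((m:ℝ)+1)^γ)^(2:ℕ) = ((m:ℝ)+1)^(γ*2) := by
          rw [← Real.rpow_natCast (((m:ℝ)+1)^γ) 2, ← Real.rpow_mul hx.le]
          norm_num
        have h4 : ((m:ℝ)+1)^(-(2*γ)) = ((((m:ℝ)+1)^γ)^(2:ℕ))⁻¹ := by
          rw [h3, ← Real.rpow_neg hx.le]
          congr 1
          ring
        have hne : ((m:ℝ)+1)^γ ≠ 0 := (Real.rpow_pos_of_pos hx γ).ne'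
        rw [hρ, hxc, h4]
        field_simp
      rw [Finset.sum_range_succ]
      push_cast
      linarith
  -- summability and the bound by r²
  have hsummable : Summable (fun j : ℕ => ((j:ℝ)+1)^(-(2*γ))) := by
    have hbase : Summable (fun j : ℕ => (j:ℝ)^(-(2*γ))) :=
      Real.summable_nat_rpow.2 (by linarith [hγ.1])
    have hcomp := hbase.comp_injective Nat.succ_injective
    have he : (fun j : ℕ => ((j:ℝ)+1)^(-(2*γ)))
        = (fun j : ℕ => (j:ℝ)^(-(2*γ))) ∘ Nat.succ := by
      funext j
      simp only [Function.comp]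
      congr 1
      push_cast
      ring
    rw [he]
    exact hcomp
  have hs0 : 0 ≤ s := by
    rw [hs]
    exact tsum_nonneg (fun j => Real.rpow_nonneg (by positivity) _)
  have hsum_le : ∀ m, (∑ j ∈ Finset.range m, ((j:ℝ)+1)^(-(2*γ))) ≤ s := by
    intro m
    rw [hs]
    exact Summable.sum_le_tsum _ (fun j _ => Real.rpow_nonneg (by positivity) _) hsummable
  have hAr : ∀ m, (∫ ω, ‖P (θ m ω) - θstar‖^2 ∂Pr) ≤ r^2 := by
    intro m
    have h1 := hAband m
    have h2 := hsum_le m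
    have hGρ : (0:ℝ) ≤ G^2/ρ₁^2 := by positivity
    have h3 : (∫ ω, ‖P (θ m ω) - θstar‖^2 ∂Pr) ≤ ‖P θ₀ - θstar‖^2 + G^2/ρ₁^2 * s := by
      nlinarith
    have hexp : 1 ≤ Real.exp (4*L^2*s/ρ₁^2) := Real.one_le_exp (by positivity)
    have hx0 : (0:ℝ) ≤ G^2*s/ρ₁^2 := by positivity
    have h4 : 4*G^2*s/ρ₁^2 + ‖P θ₀ - θstar‖^2
        ≤ Real.exp (4*L^2*s/ρ₁^2) * (4*G^2*s/ρ₁^2 + ‖P θ₀ - θstar‖^2) := by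
      have hnn : (0:ℝ) ≤ 4*G^2*s/ρ₁^2 + ‖P θ₀ - θstar‖^2 := by positivity
      nlinarith
    have h5 : G^2/ρ₁^2 * s = G^2*s/ρ₁^2 := by ring
    rw [hr]
    ring_nf at h3 h4 hx0 ⊢
    linarith [h3, h4, hx0]
  -- final computation
  intro k hk
  obtain ⟨B, hB0, hB⟩ := habd (k-1)
  have hYmeas : ∀ i : Fin n, Measurable (fun ω => ‖gradient (f i) (P (θ (k-1) ω))‖^2) := by
    intro i
    exact ((((hgradcont i).comp hPcont).measurable.comp (hθmeas (k-1))).norm).pow_const 2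
  have hYbd : ∀ (i : Fin n) ω, ‖gradient (f i) (P (θ (k-1) ω))‖ ≤ Real.sqrt n * G + L * B := by
    intro i ω
    have h1 := hLip i (P (θ (k-1) ω)) θstar
    have h2 := hGb i
    have h3 := hB ω
    have h4 : ‖gradient (f i) (P (θ (k-1) ω))‖
        ≤ ‖gradient (f i) θstar‖ + ‖gradient (f i) (P (θ (k-1) ω)) - gradient (f i) θstar‖ := by
      have he : gradient (f i) (P (θ (k-1) ω))
          = gradient (f i) θstar + (gradient (f i) (P (θ (k-1) ω)) - gradient (f i) θstar) := by
        abel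
      nth_rewrite 1 [he]
      exact norm_add_le _ _
    nlinarith [mul_le_mul_of_nonneg_left h3 hL.le]
  have hYabs : ∀ (i : Fin n) ω, |‖gradient (f i) (P (θ (k-1) ω))‖^2| ≤ (Real.sqrt n * G + L * B)^2 := by
    intro i ω
    rw [abs_of_nonneg (sq_nonneg _)]
    exact pow_le_pow_left₀ (norm_nonneg _) (hYbd i ω) 2
  have hYint : ∀ i : Fin n, Integrable (fun ω => ‖gradient (f i) (P (θ (k-1) ω))‖^2) Pr :=
    fun i => hintb _ ((Real.sqrt n * G + L * B)^2) (hYmeas i) (hYabs i)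
  have hYsq : ∀ (i : Fin n) ω, ‖gradient (f i) (P (θ (k-1) ω))‖^2
      ≤ 2*‖gradient (f i) θstar‖^2 + 2*L^2*‖P (θ (k-1) ω) - θstar‖^2 := by
    intro i ω
    have h1 := hLip i (P (θ (k-1) ω)) θstar
    have h4 : ‖gradient (f i) (P (θ (k-1) ω))‖
        ≤ ‖gradient (f i) θstar‖ + L * ‖P (θ (k-1) ω) - θstar‖ := by
      have he : gradient (f i) (P (θ (k-1) ω))
          = gradient (f i) θstar + (gradient (f i) (P (θ (k-1) ω)) - gradient (f i) θstar) := by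
        abel
      calc ‖gradient (f i) (P (θ (k-1) ω))‖
          ≤ ‖gradient (f i) θstar‖ + ‖gradient (f i) (P (θ (k-1) ω)) - gradient (f i) θstar‖ := by
            nth_rewrite 1 [he]
            exact norm_add_le _ _
        _ ≤ _ := by linarith
    nlinarith [norm_nonneg (gradient (f i) (P (θ (k-1) ω))), norm_nonneg (gradient (f i) θstar),
      norm_nonneg (P (θ (k-1) ω) - θstar), mul_nonneg hL.le (norm_nonneg (P (θ (k-1) ω) - θstar)),
      sq_nonneg (‖gradient (f i) θstar‖ - L * ‖P (θ (k-1) ω) - θstar‖)]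
  have hEq : (fun ω => ‖gradient (f (ξ k ω)) (P (θ (k-1) ω))‖^2)
      = fun ω => ∑ i, (if ξ k ω = i then ‖gradient (f i) (P (θ (k-1) ω))‖^2 else 0) := by
    funext ω
    simp
  have hitemeasY : ∀ i : Fin n,
      Measurable (fun ω => if ξ k ω = i then ‖gradient (f i) (P (θ (k-1) ω))‖^2 else 0) :=
    fun i => Measurable.ite ((hξmeas k) (measurableSet_singleton i)) (hYmeas i) measurable_const
  have hitebdY : ∀ (i : Fin n) ω,
      |(if ξ k ω = i then ‖gradient (f i) (P (θ (k-1) ω))‖^2 else 0)| ≤ (Real.sqrt n * G + L * B)^2 := by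
    intro i ω
    by_cases h : ξ k ω = i
    · simpa [h] using hYabs i ω
    · simp [h]
      positivity
  have hsplitY : ∀ i : Fin n,
      (∫ ω, (if ξ k ω = i then ‖gradient (f i) (P (θ (k-1) ω))‖^2 else 0) ∂Pr)
        = (1/n : ℝ) * ∫ ω, ‖gradient (f i) (P (θ (k-1) ω))‖^2 ∂Pr := by
    intro i
    refine spd_split Pr hn ξ hξmeas hξindep hξunif k hk _
      (hYmeas i) ((Real.sqrt n * G + L * B)^2) (hYabs i) ?_ i
    intro ω ω' hjj
    have : θ (k-1) ω = θ (k-1) ω' := hdetθ (k-1) ω ω' (fun j hj1 hj2 => hjj j (by omega))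
    rw [this]
  have hYle : ∀ i : Fin n, (∫ ω, ‖gradient (f i) (P (θ (k-1) ω))‖^2 ∂Pr)
      ≤ 2*‖gradient (f i) θstar‖^2 + 2*L^2 * ∫ ω, ‖P (θ (k-1) ω) - θstar‖^2 ∂Pr := by
    intro i
    have hint2 : Integrable (fun ω => 2*‖gradient (f i) θstar‖^2
        + 2*L^2*‖P (θ (k-1) ω) - θstar‖^2) Pr :=
      (integrable_const _).add ((haint (k-1)).const_mul _)
    have := integral_mono (hYint i) hint2 (hYsq i)
    have hI4 : Integrable (fun ω => 2*L^2*‖P (θ (k-1) ω) - θstar‖^2) Pr :=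
      (haint (k-1)).const_mul _
    rwa [integral_add (integrable_const _) hI4, integral_const,
      integral_const_mul _ _, probReal_univ, smul_eq_mul, one_mul] at this
  rw [hEq, integral_finset_sum _
    (fun i _ => hintb _ ((Real.sqrt n * G + L * B)^2) (hitemeasY i) (hitebdY i))]
  have hn' : (n:ℝ) ≠ 0 := ne_of_gt hn0
  calc (∑ i : Fin n, ∫ ω, (if ξ k ω = i then ‖gradient (f i) (P (θ (k-1) ω))‖^2 else 0) ∂Pr)
      = ∑ i : Fin n, (1/n : ℝ) * ∫ ω, ‖gradient (f i) (P (θ (k-1) ω))‖^2 ∂Pr :=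
        Finset.sum_congr rfl (fun i _ => hsplitY i)
    _ ≤ ∑ i : Fin n, (1/n : ℝ) * (2*‖gradient (f i) θstar‖^2
          + 2*L^2 * ∫ ω, ‖P (θ (k-1) ω) - θstar‖^2 ∂Pr) :=
        Finset.sum_le_sum (fun i _ => mul_le_mul_of_nonneg_left (hYle i) (by positivity))
    _ = 2*G^2 + 2*L^2 * ∫ ω, ‖P (θ (k-1) ω) - θstar‖^2 ∂Pr := by
        rw [← Finset.mul_sum, Finset.sum_add_distrib, ← Finset.mul_sum, hGsum,
          Finset.sum_const, Finset.card_univ, Fintype.card_fin, nsmul_eq_mul]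
        field_simp
    _ ≤ 2*G^2 + 2*L^2 * r^2 := by
        have := hAr (k-1)
        nlinarith [sq_nonneg L]
    _ = c^2 := by rw [hc]; ring
end

section
/- Let (Ω, ℱ, ℙ) be a probability space with an increasing sequence of sub-σ-fields ℱ_k ⊆ ℱ_{k+1} (k = 0, 1, …), and let Y_k, Z_k, W_k (k = 0, 1, …) be sequences of nonnegative integrable random variables such that Y_k, Z_k, W_k are ℱ_k-measurable for each k, E[Y_{k+1} | ℱ_k] ≤ Y_k − Z_k + W_k for each k, and Σ_{k=0}^∞ W_k < ∞ with probability 1. Then Σ_{k=0}^∞ Z_k < ∞ with probability 1, and the sequence Y_k converges with probability 1 to a nonnegative random variable Y. -/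
open MeasureTheory Filter Topology

/-- Auxiliary truncated process for the Robbins–Siegmund theorem. -/
noncomputable def rsN {Ω : Type*} (A : ℕ → Set Ω) (D : ℕ → Ω → ℝ) (Y0 : Ω → ℝ) : ℕ → Ω → ℝ
  | 0 => Y0
  | (k+1) => fun ω => rsN A D Y0 k ω + (A k).indicator (D k) ω

/-- Supermartingale (Robbins–Siegmund) convergence theorem: if
E[Y_{k+1} | ℱ_k] ≤ Y_k − Z_k + W_k with Y, Z, W nonnegative, integrable,
adapted, and Σ W_k < ∞ a.s., then Σ Z_k < ∞ a.s. and Y_k converges a.s.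
to a nonnegative random variable. -/
theorem stmt_12 {Ω : Type*} {mΩ : MeasurableSpace Ω}
    (μ : Measure Ω) [IsProbabilityMeasure μ]
    (ℱ : Filtration ℕ mΩ) (Y Z W : ℕ → Ω → ℝ)
    (hYnn : ∀ k ω, 0 ≤ Y k ω) (hZnn : ∀ k ω, 0 ≤ Z k ω) (hWnn : ∀ k ω, 0 ≤ W k ω)
    (hYint : ∀ k, Integrable (Y k) μ) (hZint : ∀ k, Integrable (Z k) μ)
    (hWint : ∀ k, Integrable (W k) μ)
    (hYmeas : ∀ k, StronglyMeasurable[ℱ k] (Y k))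
    (hZmeas : ∀ k, StronglyMeasurable[ℱ k] (Z k))
    (hWmeas : ∀ k, StronglyMeasurable[ℱ k] (W k))
    (hcond : ∀ k, ∀ᵐ ω ∂μ, (μ[Y (k + 1)|ℱ k]) ω ≤ Y k ω - Z k ω + W k ω)
    (hWsum : ∀ᵐ ω ∂μ, Summable (fun k => W k ω)) :
    (∀ᵐ ω ∂μ, Summable (fun k => Z k ω)) ∧
      ∃ Ylim : Ω → ℝ, Measurable Ylim ∧ (∀ ω, 0 ≤ Ylim ω) ∧
        ∀ᵐ ω ∂μ, Tendsto (fun k => Y k ω) atTop (nhds (Ylim ω)) := by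
  classical
  set M : ℕ → Ω → ℝ :=
    fun k ω => Y k ω + ∑ i ∈ Finset.range k, Z i ω - ∑ i ∈ Finset.range k, W i ω with hM
  set D : ℕ → Ω → ℝ := fun k ω => Y (k+1) ω - Y k ω + Z k ω - W k ω with hD
  have hDint : ∀ k, Integrable (D k) μ := fun k =>
    (((hYint (k+1)).sub (hYint k)).add (hZint k)).sub (hWint k)
  have hDMk : ∀ k ω, M (k+1) ω = M k ω + D k ω := by
    intro k ω
    simp only [hM, hD, Finset.sum_range_succ]
    ring
  have hsumW : ∀ k, StronglyMeasurable[ℱ k] fun ω => ∑ i ∈ Finset.range (k+1), W i ω := fun k =>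
    Finset.stronglyMeasurable_fun_sum _ fun i hi =>
      (hWmeas i).mono (ℱ.mono (Nat.lt_succ_iff.mp (Finset.mem_range.mp hi)))
  -- conditional expectation of the increment is nonpositive
  have hDcond : ∀ k, (μ[D k|ℱ k]) ≤ᵐ[μ] fun _ => (0:ℝ) := by
    intro k
    set g : Ω → ℝ := fun ω => Z k ω - W k ω - Y k ω with hg
    have hgsm : StronglyMeasurable[ℱ k] g :=
      ((hZmeas k).sub (hWmeas k)).sub (hYmeas k)
    have hgint : Integrable g μ := ((hZint k).sub (hWint k)).sub (hYint k)
    have h1 : D k = Y (k+1) + g := by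
      funext ω; simp only [hD, hg, Pi.add_apply]; ring
    have h2 : μ[D k|ℱ k] =ᵐ[μ] μ[Y (k+1)|ℱ k] + μ[g|ℱ k] := by
      rw [h1]; exact condExp_add (hYint (k+1)) hgint _
    have h3 : μ[g|ℱ k] = g := condExp_of_stronglyMeasurable (ℱ.le k) hgsm hgint
    filter_upwards [h2, hcond k] with ω e2 hcω
    rw [e2, Pi.add_apply, h3]
    simp only [hg]
    linarith
  have hMadp : ∀ k, StronglyMeasurable[ℱ k] (M k) := fun k =>
    ((hYmeas k).add (Finset.stronglyMeasurable_fun_sum _ fun i hi =>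
        (hZmeas i).mono (ℱ.mono (Finset.mem_range.mp hi).le))).sub
      (Finset.stronglyMeasurable_fun_sum _ fun i hi =>
        (hWmeas i).mono (ℱ.mono (Finset.mem_range.mp hi).le))
  have hMint : ∀ k, Integrable (M k) μ := fun k =>
    ((hYint k).add (integrable_finset_sum _ fun i _ => hZint i)).sub
      (integrable_finset_sum _ fun i _ => hWint i)
  -- main truncation argument
  have main : ∀ a : ℕ, ∀ᵐ ω ∂μ,
      (∀ k, ∑ i ∈ Finset.range (k+1), W i ω ≤ (a:ℝ)) →
        ∃ c, Tendsto (fun k => M k ω) atTop (𝓝 c) := by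
    intro a
    set A : ℕ → Set Ω := fun k => {ω | ∑ i ∈ Finset.range (k+1), W i ω ≤ (a:ℝ)} with hA
    set N : ℕ → Ω → ℝ := rsN A D (Y 0) with hN
    have hAmeas : ∀ k, MeasurableSet[ℱ k] (A k) := fun k =>
      measurableSet_le (hsumW k).measurable measurable_const
    have hNsucc : ∀ k, N (k+1) = fun ω => N k ω + (A k).indicator (D k) ω := fun k => rfl
    have hNadp : ∀ k, StronglyMeasurable[ℱ k] (N k) := by
      intro k; induction k with
      | zero => exact hYmeas 0
      | succ k ih =>
        rw [hNsucc k]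
        have hD' : StronglyMeasurable[ℱ (k+1)] (D k) :=
          (((hYmeas (k+1)).sub ((hYmeas k).mono (ℱ.mono k.le_succ))).add
            ((hZmeas k).mono (ℱ.mono k.le_succ))).sub ((hWmeas k).mono (ℱ.mono k.le_succ))
        exact (ih.mono (ℱ.mono k.le_succ)).add
          (hD'.indicator ((ℱ.mono k.le_succ) _ (hAmeas k)))
    have hNint : ∀ k, Integrable (N k) μ := by
      intro k; induction k with
      | zero => exact hYint 0
      | succ k ih =>
        rw [hNsucc k]
        exact ih.add ((hDint k).indicator (ℱ.le k _ (hAmeas k)))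
    have hNcond : ∀ k, μ[N (k+1)|ℱ k] ≤ᵐ[μ] N k := by
      intro k
      have h1 : μ[N (k+1)|ℱ k] =ᵐ[μ] μ[N k|ℱ k] + μ[(A k).indicator (D k)|ℱ k] := by
        rw [show N (k+1) = N k + (A k).indicator (D k) from rfl]
        exact condExp_add (hNint k) ((hDint k).indicator (ℱ.le k _ (hAmeas k))) _
      have h2 : μ[N k|ℱ k] = N k :=
        condExp_of_stronglyMeasurable (ℱ.le k) (hNadp k) (hNint k)
      have h3 : μ[(A k).indicator (D k)|ℱ k] =ᵐ[μ] (A k).indicator (μ[D k|ℱ k]) :=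
        condExp_indicator (hDint k) (hAmeas k)
      filter_upwards [h1, h3, hDcond k] with ω e1 e3 hd
      have hind : (A k).indicator (μ[D k|ℱ k]) ω ≤ 0 := by
        by_cases hmem : ω ∈ A k
        · rw [Set.indicator_of_mem hmem]; exact hd
        · rw [Set.indicator_of_notMem hmem]
      calc (μ[N (k+1)|ℱ k]) ω
          = (μ[N k|ℱ k]) ω + (μ[(A k).indicator (D k)|ℱ k]) ω := e1
        _ = N k ω + (A k).indicator (μ[D k|ℱ k]) ω := by rw [h2, e3]
        _ ≤ N k ω + 0 := by linarith
        _ = N k ω := add_zero _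
    have hNsuper : Supermartingale N ℱ μ := supermartingale_nat hNadp hNint hNcond
    -- key invariant: lower bound and agreement with M
    have hkey : ∀ k, ∀ ω, (-(a:ℝ) ≤ N k ω) ∧
        (∑ i ∈ Finset.range k, W i ω ≤ (a:ℝ) → N k ω = M k ω) := by
      intro k; induction k with
      | zero =>
        intro ω
        constructor
        · have : (0:ℝ) ≤ (a:ℝ) := Nat.cast_nonneg a
          have := hYnn 0 ω
          show -(a:ℝ) ≤ Y 0 ω
          linarith
        · intro _
          show Y 0 ω = M 0 ω
          simp [hM]
      | succ k ih =>
        intro ω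
        by_cases hmem : ω ∈ A k
        · have hsum : ∑ i ∈ Finset.range (k+1), W i ω ≤ (a:ℝ) := hmem
          have hsum' : ∑ i ∈ Finset.range k, W i ω ≤ (a:ℝ) := by
            rw [Finset.sum_range_succ] at hsum
            have := hWnn k ω
            linarith
          have hNM : N k ω = M k ω := (ih ω).2 hsum'
          have hval : N (k+1) ω = M (k+1) ω := by
            rw [hNsucc k]
            simp only [Set.indicator_of_mem hmem, hNM]
            rw [← hDMk k ω]
          constructor
          · rw [hval]
            have h1 : (0:ℝ) ≤ ∑ i ∈ Finset.range (k+1), Z i ω :=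
              Finset.sum_nonneg fun i _ => hZnn i ω
            have h2 := hYnn (k+1) ω
            simp only [hM]
            linarith
          · intro _; exact hval
        · have hval : N (k+1) ω = N k ω := by
            rw [hNsucc k]
            show N k ω + (A k).indicator (D k) ω = N k ω
            rw [Set.indicator_of_notMem hmem, add_zero]
          constructor
          · rw [hval]; exact (ih ω).1
          · intro hcontra; exact absurd hcontra hmem
    -- L¹ bound
    have hEN : ∀ k, ∫ ω, N k ω ∂μ ≤ ∫ ω, Y 0 ω ∂μ := by
      intro k
      have := hNsuper.setIntegral_le (Nat.zero_le k) MeasurableSet.univ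
      simpa [setIntegral_univ, show N 0 = Y 0 from rfl] using this
    have hsn : ∀ k, eLpNorm ((fun k => -N k) k) 1 μ ≤
        ENNReal.ofReal (∫ ω, Y 0 ω ∂μ + 2*a) := by
      intro k
      simp only
      rw [eLpNorm_neg, eLpNorm_one_eq_lintegral_enorm,
        ← ofReal_integral_norm_eq_lintegral_enorm (hNint k)]
      apply ENNReal.ofReal_le_ofReal
      have habs : ∀ ω, ‖N k ω‖ ≤ N k ω + 2*a := by
        intro ω
        have h1 := (hkey k ω).1
        have h2 : (0:ℝ) ≤ (a:ℝ) := Nat.cast_nonneg a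
        rw [Real.norm_eq_abs]
        rcases abs_cases (N k ω) with ⟨he, _⟩ | ⟨he, _⟩ <;> rw [he] <;> linarith
      have hmono : ∫ ω, ‖N k ω‖ ∂μ ≤ ∫ ω, (N k ω + 2*a) ∂μ :=
        integral_mono (hNint k).norm ((hNint k).add (integrable_const _)) habs
      rw [integral_add (hNint k) (integrable_const _), integral_const] at hmono
      simp only [probReal_univ, smul_eq_mul, one_mul] at hmono
      linarith [hEN k]
    have hconv := (hNsuper.neg.exists_ae_tendsto_of_bdd
      (R := (∫ ω, Y 0 ω ∂μ + 2*a).toNNReal)) hsn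
    filter_upwards [hconv] with ω hc hb
    obtain ⟨c, hc⟩ := hc
    have hNM : ∀ k, N k ω = M k ω := by
      intro k
      refine (hkey k ω).2 ?_
      refine le_trans ?_ (hb k)
      rw [Finset.sum_range_succ]
      exact le_add_of_nonneg_right (hWnn k ω)
    refine ⟨-c, ?_⟩
    have hNt : Tendsto (fun k => N k ω) atTop (𝓝 (-c)) := by
      have := hc.neg
      simpa using this
    have heq : (fun k => M k ω) = fun k => N k ω := by
      funext k; rw [hNM k]
    rw [heq]
    exact hNt
  -- combine over all levels a
  have hMconv : ∀ᵐ ω ∂μ, Summable (fun k => W k ω) ∧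
      ∃ c, Tendsto (fun k => M k ω) atTop (𝓝 c) := by
    filter_upwards [ae_all_iff.mpr main, hWsum] with ω hm hw
    refine ⟨hw, ?_⟩
    obtain ⟨a, ha⟩ := exists_nat_ge (∑' k, W k ω)
    exact hm a fun k =>
      le_trans (hw.sum_le_tsum _ (fun i _ => hWnn i ω)) ha
  -- the limit function
  set Ylim : Ω → ℝ := fun ω => (⨅ n : ℕ, ⨆ i : ℕ, ENNReal.ofReal (Y (i + n) ω)).toReal
    with hYlimdef
  have hmeasYlim : Measurable Ylim := by
    apply Measurable.ennreal_toReal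
    exact Measurable.iInf fun n => Measurable.iSup fun i =>
      ((hYmeas (i+n)).measurable.mono (ℱ.le _) le_rfl).ennreal_ofReal
  have hfinal : ∀ᵐ ω ∂μ, Summable (fun k => Z k ω) ∧
      Tendsto (fun k => Y k ω) atTop (𝓝 (Ylim ω)) := by
    filter_upwards [hMconv] with ω hpair
    obtain ⟨hw, c, hc⟩ := hpair
    have hWt : Tendsto (fun k => ∑ i ∈ Finset.range k, W i ω) atTop (𝓝 (∑' i, W i ω)) :=
      hw.hasSum.tendsto_sum_nat
    have hGt : Tendsto (fun k => Y k ω + ∑ i ∈ Finset.range k, Z i ω) atTop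
        (𝓝 (c + ∑' i, W i ω)) := by
      have h := hc.add hWt
      have heq : (fun k => Y k ω + ∑ i ∈ Finset.range k, Z i ω)
          = fun k => M k ω + ∑ i ∈ Finset.range k, W i ω := by
        funext k; simp only [hM]; ring
      rw [heq]
      exact h
    have hTle : ∀ k, ∑ i ∈ Finset.range k, Z i ω ≤ c + ∑' i, W i ω := by
      intro k
      refine ge_of_tendsto hGt ?_
      filter_upwards [eventually_ge_atTop k] with j hj
      calc ∑ i ∈ Finset.range k, Z i ω
          ≤ ∑ i ∈ Finset.range j, Z i ω :=
            Finset.sum_le_sum_of_subset_of_nonneg (Finset.range_subset_range.mpr hj)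
              fun i _ _ => hZnn i ω
        _ ≤ Y j ω + ∑ i ∈ Finset.range j, Z i ω := le_add_of_nonneg_left (hYnn j ω)
    have hZs : Summable (fun k => Z k ω) :=
      summable_of_sum_range_le (fun n => hZnn n ω) hTle
    refine ⟨hZs, ?_⟩
    have hZt : Tendsto (fun k => ∑ i ∈ Finset.range k, Z i ω) atTop (𝓝 (∑' i, Z i ω)) :=
      hZs.hasSum.tendsto_sum_nat
    set ℓ : ℝ := c + ∑' i, W i ω - ∑' i, Z i ω with hℓ
    have hYt : Tendsto (fun k => Y k ω) atTop (𝓝 ℓ) := by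
      have h := hGt.sub hZt
      have heq : (fun k => (Y k ω + ∑ i ∈ Finset.range k, Z i ω)
          - ∑ i ∈ Finset.range k, Z i ω) = fun k => Y k ω := by
        funext k; ring
      rwa [heq] at h
    have hℓnn : 0 ≤ ℓ := ge_of_tendsto hYt (Eventually.of_forall fun k => hYnn k ω)
    have hofReal : Tendsto (fun k => ENNReal.ofReal (Y k ω)) atTop (𝓝 (ENNReal.ofReal ℓ)) :=
      (ENNReal.continuous_ofReal.tendsto _).comp hYt
    have hls : (⨅ n : ℕ, ⨆ i : ℕ, ENNReal.ofReal (Y (i + n) ω)) = ENNReal.ofReal ℓ := by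
      have h := limsup_eq_iInf_iSup_of_nat' (u := fun m => ENNReal.ofReal (Y m ω))
      exact h.symm.trans hofReal.limsup_eq
    have hYlimω : Ylim ω = ℓ := by
      rw [hYlimdef]
      simp only
      rw [hls, ENNReal.toReal_ofReal hℓnn]
    rw [hYlimω]
    exact hYt
  refine ⟨?_, Ylim, hmeasYlim, fun ω => ENNReal.toReal_nonneg, ?_⟩
  · filter_upwards [hfinal] with ω h using h.1
  · filter_upwards [hfinal] with ω h using h.2
end
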